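/- arXiv:1411.3267 — 8 statements merged into one kernel-verified Lean document; each statement's English description precedes it below -/
import Mathlib

section
/- Let μ : ℝ → ℂ be a bounded continuous ergodic function with mean M(μ), and let α > 0 satisfy Re(M(μ)) < −α. Then there exist constants T₀ > 0 and c > 0 such that: (i) Re(∫_s^t μ(r) dr) < −α(t−s) for all s, t ∈ ℝ with t − s > T₀; and (ii) |exp(∫_s^t μ(r) dr)| ≤ c·exp(−α(t−s)) for all t, s with t ≥ s ≥ 0. -/
open MeasureTheory Filter Topology

/-- A bounded continuous function `f : ℝ → ℂ` is ergodic with mean `M` if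
`(1/(2T)) ∫_{−T+ξ}^{T+ξ} f(s) ds → M` as `T → ∞`, uniformly with respect to `ξ ∈ ℝ`. -/
def ErgodicMeanC (f : ℝ → ℂ) (M : ℂ) : Prop :=
  ∀ ε > 0, ∃ T₁ > (0 : ℝ), ∀ T ≥ T₁, ∀ ξ : ℝ,
    ‖(((2 * T : ℝ) : ℂ))⁻¹ * (∫ s in (-T + ξ)..(T + ξ), f s) - M‖ < ε

theorem ergodic_negative_mean_exponential_estimates
    (μ : ℝ → ℂ) (hμc : Continuous μ) (hμb : ∃ C, ∀ t, ‖μ t‖ ≤ C)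
    (M : ℂ) (hM : ErgodicMeanC μ M)
    (α : ℝ) (hα : 0 < α) (hMα : M.re < -α) :
    ∃ T₀ > (0 : ℝ), ∃ c > (0 : ℝ),
      (∀ s t : ℝ, t - s > T₀ → (∫ r in s..t, μ r).re < -α * (t - s)) ∧
      (∀ s t : ℝ, 0 ≤ s → s ≤ t →
        ‖Complex.exp (∫ r in s..t, μ r)‖ ≤ c * Real.exp (-α * (t - s))) := by
  obtain ⟨C, hC⟩ := hμb
  have hC0 : 0 ≤ C := le_trans (norm_nonneg _) (hC 0)
  have hε0 : 0 < -α - M.re := by linarith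
  obtain ⟨T₁, hT₁, hT⟩ := hM (-α - M.re) hε0
  have key : ∀ s t : ℝ, t - s > 2 * T₁ → (∫ r in s..t, μ r).re < -α * (t - s) := by
    intro s t hst
    set T : ℝ := (t - s) / 2 with hTdef
    set ξ : ℝ := (s + t) / 2 with hξdef
    have hTpos : 0 < T := by simp only [hTdef]; linarith
    have hint : (∫ r in s..t, μ r) = ∫ r in (-T + ξ)..(T + ξ), μ r := by
      congr 1 <;> (simp only [hTdef, hξdef]; ring)
    have h := hT T (by simp only [hTdef]; linarith) ξ
    have h2T : (2 * T : ℝ) ≠ 0 := by positivity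
    set I : ℂ := ∫ r in (-T + ξ)..(T + ξ), μ r with hI
    have hre : (((2 * T : ℝ) : ℂ)⁻¹ * I - M).re = (2 * T)⁻¹ * I.re - M.re := by
      simp [Complex.sub_re, ← Complex.ofReal_inv, Complex.re_ofReal_mul]
    have h1 : (2 * T)⁻¹ * I.re - M.re < -α - M.re := by
      calc (2 * T)⁻¹ * I.re - M.re = (((2 * T : ℝ) : ℂ)⁻¹ * I - M).re := hre.symm
        _ ≤ |(((2 * T : ℝ) : ℂ)⁻¹ * I - M).re| := le_abs_self _
        _ ≤ ‖((2 * T : ℝ) : ℂ)⁻¹ * I - M‖ := Complex.abs_re_le_norm _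
        _ < -α - M.re := h
    have h2 : (2 * T)⁻¹ * I.re < -α := by linarith
    have h3 : I.re < -α * (2 * T) := by
      have := mul_lt_mul_of_pos_right h2 (by positivity : (0:ℝ) < 2 * T)
      rwa [inv_mul_eq_div, div_mul_cancel₀ _ h2T] at this
    rw [hint]
    have : 2 * T = t - s := by simp only [hTdef]; ring
    rwa [this] at h3
  refine ⟨2 * T₁, by linarith, Real.exp ((C + α) * (2 * T₁)), Real.exp_pos _, key, ?_⟩
  intro s t hs hst
  have hnorm : ‖Complex.exp (∫ r in s..t, μ r)‖ = Real.exp (∫ r in s..t, μ r).re :=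
    Complex.norm_exp _
  rw [hnorm, ← Real.exp_add]
  by_cases hcase : t - s > 2 * T₁
  · have := key s t hcase
    apply Real.exp_le_exp.mpr
    have : (0:ℝ) ≤ (C + α) * (2 * T₁) := by positivity
    linarith [key s t hcase]
  · push_neg at hcase
    have hIb : ‖(∫ r in s..t, μ r)‖ ≤ C * |t - s| := by
      apply intervalIntegral.norm_integral_le_of_norm_le_const
      intro x _; exact hC x
    have habs : |t - s| = t - s := abs_of_nonneg (by linarith)
    have hre_le : (∫ r in s..t, μ r).re ≤ C * (t - s) := by
      calc (∫ r in s..t, μ r).re ≤ |(∫ r in s..t, μ r).re| := le_abs_self _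
        _ ≤ ‖(∫ r in s..t, μ r)‖ := Complex.abs_re_le_norm _
        _ ≤ C * (t - s) := by rwa [habs] at hIb
    apply Real.exp_le_exp.mpr
    nlinarith [hC0, hα.le, hcase, sub_nonneg.mpr hst]
end

section
/- Let μ : ℝ → ℂ be a bounded continuous ergodic function with mean M(μ), and let α > 0 satisfy Re(M(μ)) > α. Then there exist constants T₀ > 0 and c > 0 such that: (i) Re(∫_s^t μ(r) dr) < α(t−s) for all s, t ∈ ℝ with s − t > T₀; and (ii) |exp(∫_s^t μ(r) dr)| ≤ c·exp(α(t−s)) for all t, s with s ≥ t ≥ 0. -/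
open MeasureTheory Filter Topology

theorem ergodic_positive_mean_exponential_estimates
    (μ : ℝ → ℂ) (hμc : Continuous μ) (hμb : ∃ C, ∀ t, ‖μ t‖ ≤ C)
    (M : ℂ) (hM : ErgodicMeanC μ M)
    (α : ℝ) (hα : 0 < α) (hMα : M.re > α) :
    ∃ T₀ > (0 : ℝ), ∃ c > (0 : ℝ),
      (∀ s t : ℝ, s - t > T₀ → (∫ r in s..t, μ r).re < α * (t - s)) ∧
      (∀ s t : ℝ, 0 ≤ t → t ≤ s →
        ‖Complex.exp (∫ r in s..t, μ r)‖ ≤ c * Real.exp (α * (t - s))) := by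
  obtain ⟨C₀, hC₀⟩ := hμb
  set C : ℝ := max C₀ 0 with hCdef
  have hC0 : (0:ℝ) ≤ C := le_max_right _ _
  have hCb : ∀ t, ‖μ t‖ ≤ C := fun t => (hC₀ t).trans (le_max_left _ _)
  have hε : (0:ℝ) < M.re - α := by linarith
  obtain ⟨T₁, hT₁pos, hT₁⟩ := hM (M.re - α) hε
  have key : ∀ s t : ℝ, s - t > 2 * T₁ → (∫ r in s..t, μ r).re < α * (t - s) := by
    intro s t h
    set T : ℝ := (s - t) / 2 with hTdef
    set ξ : ℝ := (s + t) / 2 with hξdef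
    have hT : T ≥ T₁ := by rw [hTdef]; linarith
    have hTpos : (0:ℝ) < 2 * T := by rw [hTdef]; linarith
    have h1 : -T + ξ = t := by rw [hTdef, hξdef]; ring
    have h2 : T + ξ = s := by rw [hTdef, hξdef]; ring
    have hmain := hT₁ T hT ξ
    rw [h1, h2] at hmain
    have hre : |((((2 * T : ℝ) : ℂ))⁻¹ * (∫ r in t..s, μ r) - M).re| ≤
        ‖(((2 * T : ℝ) : ℂ))⁻¹ * (∫ r in t..s, μ r) - M‖ :=
      Complex.abs_re_le_norm _
    have hlt : ((((2 * T : ℝ) : ℂ))⁻¹ * (∫ r in t..s, μ r)).re > α := by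
      have := lt_of_le_of_lt hre hmain
      rw [abs_lt] at this
      have h3 := this.1
      simp only [Complex.sub_re] at h3
      linarith
    have heq : ((((2 * T : ℝ) : ℂ))⁻¹ * (∫ r in t..s, μ r)).re =
        (2 * T)⁻¹ * (∫ r in t..s, μ r).re := by
      rw [← Complex.ofReal_inv, Complex.re_ofReal_mul]
    rw [heq] at hlt
    have h4 : (∫ r in t..s, μ r).re > α * (2 * T) := by
      have h5 := (mul_lt_mul_iff_right₀ hTpos).mpr hlt
      rw [← mul_assoc, mul_inv_cancel₀ (ne_of_gt hTpos), one_mul] at h5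
      linarith
    have hsym : (∫ r in s..t, μ r) = -(∫ r in t..s, μ r) :=
      intervalIntegral.integral_symm t s
    rw [hsym, Complex.neg_re]
    have : α * (2 * T) = α * (s - t) := by rw [hTdef]; ring
    rw [this] at h4
    nlinarith
  refine ⟨2 * T₁, by linarith, Real.exp ((C + α) * (2 * T₁)), Real.exp_pos _, key, ?_⟩
  intro s t ht hts
  have hnorm : ‖∫ r in s..t, μ r‖ ≤ C * |t - s| :=
    intervalIntegral.norm_integral_le_of_norm_le_const (fun x _ => hCb x)
  have habs : |t - s| = s - t := by rw [abs_sub_comm]; exact abs_of_nonneg (by linarith)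
  rw [habs] at hnorm
  have hre2 : (∫ r in s..t, μ r).re ≤ C * (s - t) :=
    le_trans (le_abs_self _) (le_trans (Complex.abs_re_le_norm _) hnorm)
  have hbound : (∫ r in s..t, μ r).re ≤ (C + α) * (2 * T₁) + α * (t - s) := by
    rcases le_or_gt (s - t) (2 * T₁) with h | h
    · nlinarith
    · have := key s t h
      nlinarith
  rw [Complex.norm_exp, ← Real.exp_add]
  exact Real.exp_le_exp.mpr hbound
end

section
/- Let h ∈ L¹(ℝ, ℂ) and let φ : ℝ → ℂ be bounded and continuous. Define the convolution Lφ(t) = ∫_ℝ h(t−s) φ(s) ds. Then Lφ is bounded and continuous with sup_{t∈ℝ} |Lφ(t)| ≤ (sup_{t∈ℝ} |φ(t)|) · ‖h‖_{L¹}; moreover, if φ is almost automorphic then Lφ is almost automorphic. -/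
open MeasureTheory Filter Topology

/-- A continuous function `ψ : ℝ → V` into a Banach space is almost automorphic if for every
sequence of reals there is a subsequence `(τₙ)` and a function `ψ̃` with
`ψ(t+τₙ) → ψ̃(t)` and `ψ̃(t−τₙ) → ψ(t)` pointwise on `ℝ`. -/
def AlmostAutomorphic {V : Type*} [NormedAddCommGroup V] (ψ : ℝ → V) : Prop :=
  Continuous ψ ∧ ∀ σ : ℕ → ℝ, ∃ k : ℕ → ℕ, StrictMono k ∧ ∃ ψt : ℝ → V,
    (∀ t : ℝ, Tendsto (fun n => ψ (t + σ (k n))) atTop (𝓝 (ψt t))) ∧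
    (∀ t : ℝ, Tendsto (fun n => ψt (t - σ (k n))) atTop (𝓝 (ψ t)))

private lemma conv_eq (h φ : ℝ → ℂ) (t : ℝ) :
    (∫ s : ℝ, h (t - s) * φ s) = ∫ u : ℝ, h u * φ (t - u) := by
  rw [← integral_sub_left_eq_self (fun u => h u * φ (t - u)) volume t]
  simp [sub_sub_cancel]

private lemma tendsto_conv (h : ℝ → ℂ) (hh : Integrable h) {C : ℝ}
    (g : ℕ → ℝ → ℂ) (gl : ℝ → ℂ)
    (hm : ∀ n, AEStronglyMeasurable (fun u => h u * g n u) (volume : Measure ℝ))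
    (hb : ∀ n u, ‖g n u‖ ≤ C)
    (hl : ∀ u, Tendsto (fun n => g n u) atTop (𝓝 (gl u))) :
    Tendsto (fun n => ∫ u : ℝ, h u * g n u) atTop (𝓝 (∫ u : ℝ, h u * gl u)) := by
  apply tendsto_integral_of_dominated_convergence (fun u => ‖h u‖ * C) hm
    (hh.norm.mul_const C)
  · intro n
    filter_upwards with u
    calc ‖h u * g n u‖ = ‖h u‖ * ‖g n u‖ := norm_mul _ _
      _ ≤ ‖h u‖ * C := mul_le_mul_of_nonneg_left (hb n u) (norm_nonneg _)
  · filter_upwards with u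
    exact tendsto_const_nhds.mul (hl u)

theorem convolution_preserves_bounded_continuous_and_almost_automorphic
    (h : ℝ → ℂ) (hh : Integrable h)
    (φ : ℝ → ℂ) (hφc : Continuous φ) (hφb : ∃ C, ∀ t, ‖φ t‖ ≤ C) :
    Continuous (fun t => ∫ s : ℝ, h (t - s) * φ s) ∧
    (∀ t : ℝ, ‖∫ s : ℝ, h (t - s) * φ s‖ ≤ (⨆ t : ℝ, ‖φ t‖) * ∫ s : ℝ, ‖h s‖) ∧
    (AlmostAutomorphic φ → AlmostAutomorphic (fun t => ∫ s : ℝ, h (t - s) * φ s)) := by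
  obtain ⟨C, hC⟩ := hφb
  have heq : (fun t => ∫ s : ℝ, h (t - s) * φ s) = fun t => ∫ u : ℝ, h u * φ (t - u) :=
    funext (conv_eq h φ)
  -- measurability helper
  have meas : ∀ c : ℝ, AEStronglyMeasurable (fun u : ℝ => h u * φ (c - u)) volume := fun c =>
    hh.aestronglyMeasurable.mul
      ((hφc.comp (continuous_const.sub continuous_id)).aestronglyMeasurable)
  -- continuity
  have cont : Continuous (fun t => ∫ u : ℝ, h u * φ (t - u)) := by
    rw [continuous_iff_seqContinuous]
    intro x a hx
    exact tendsto_conv h hh (fun n u => φ (x n - u)) (fun u => φ (a - u))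
      (fun n => meas (x n)) (fun n u => hC _)
      (fun u => (hφc.tendsto _).comp ((hx.sub_const u)))
  refine ⟨heq ▸ cont, ?_, ?_⟩
  · -- bound
    intro t
    have bdd : BddAbove (Set.range fun t => ‖φ t‖) := ⟨C, by rintro _ ⟨s, rfl⟩; exact hC s⟩
    set M := ⨆ t : ℝ, ‖φ t‖ with hM
    have hMle : ∀ s, ‖φ s‖ ≤ M := fun s => le_ciSup bdd s
    have hint : Integrable (fun s => M * ‖h (t - s)‖) volume :=
      (hh.norm.comp_sub_left t).const_mul M
    have hb : ‖∫ s : ℝ, h (t - s) * φ s‖ ≤ ∫ s : ℝ, M * ‖h (t - s)‖ := by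
      apply norm_integral_le_of_norm_le hint
      filter_upwards with s
      calc ‖h (t - s) * φ s‖ = ‖φ s‖ * ‖h (t - s)‖ := by rw [norm_mul, mul_comm]
        _ ≤ M * ‖h (t - s)‖ := mul_le_mul_of_nonneg_right (hMle s) (norm_nonneg _)
    calc ‖∫ s : ℝ, h (t - s) * φ s‖ ≤ ∫ s : ℝ, M * ‖h (t - s)‖ := hb
      _ = M * ∫ s : ℝ, ‖h (t - s)‖ := integral_const_mul _ _
      _ = M * ∫ s : ℝ, ‖h s‖ := by rw [integral_sub_left_eq_self (fun s => ‖h s‖) volume t]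
  · -- almost automorphic
    rintro ⟨-, hAA⟩
    rw [heq]
    refine ⟨cont, fun σ => ?_⟩
    obtain ⟨k, hk, ψt, h1, h2⟩ := hAA σ
    have ψt_sm : StronglyMeasurable ψt :=
      stronglyMeasurable_of_tendsto atTop
        (fun n => ((hφc.comp (continuous_id.add continuous_const)).stronglyMeasurable :
          StronglyMeasurable fun t : ℝ => φ (t + σ (k n))))
        (tendsto_pi_nhds.mpr h1)
    have hψtC : ∀ s, ‖ψt s‖ ≤ C := fun s =>
      le_of_tendsto ((h1 s).norm) (Eventually.of_forall fun n => hC _)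
    refine ⟨k, hk, fun t => ∫ u : ℝ, h u * ψt (t - u), ?_, ?_⟩
    · intro t
      exact tendsto_conv h hh (C := C) (fun n u => φ (t + σ (k n) - u))
        (fun u => ψt (t - u))
        (fun n => meas (t + σ (k n)))
        (fun n u => hC _)
        (fun u => by
          simpa [show ∀ n, t - u + σ (k n) = t + σ (k n) - u from fun n => by ring]
            using h1 (t - u))
    · intro t
      exact tendsto_conv h hh (C := C) (fun n u => ψt (t - σ (k n) - u))
        (fun u => φ (t - u))
        (fun n => hh.aestronglyMeasurable.mul
          ((ψt_sm.comp_measurable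
            (measurable_const.sub measurable_id)).aestronglyMeasurable))
        (fun n u => hψtC _)
        (fun u => by
          simpa [show ∀ n, t - u - σ (k n) = t - σ (k n) - u from fun n => by ring]
            using h2 (t - u))
end

section
/- Let α > 0 and let φ : ℝ → ℂ be bounded, continuous and almost automorphic. Then the functions L₁φ(t) = ∫_{−∞}^t e^{−α(t−s)} φ(s) ds and L₂φ(t) = ∫_t^{∞} e^{α(t−s)} φ(s) ds are well defined, bounded, continuous and almost automorphic, and sup_{t∈ℝ} |Lᵢφ(t)| ≤ (sup_{t∈ℝ} |φ(t)|)/α for i = 1, 2. -/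
open MeasureTheory Filter Topology

section ExpConvAux

open Set Real

variable {α : ℝ}

private lemma expconv_exp_int (hα : 0 < α) :
    IntegrableOn (fun x : ℝ => Real.exp (-α * x)) (Set.Ioi 0) :=
  exp_neg_integrableOn_Ioi 0 hα

private lemma expconv_exp_val (hα : 0 < α) :
    ∫ x in Set.Ioi (0 : ℝ), Real.exp (-α * x) = 1 / α := by
  have hd : ∀ x ∈ Ici (0 : ℝ),
      HasDerivAt (fun y => -Real.exp (-α * y) / α) (Real.exp (-α * x)) x := by
    intro x _
    have h1 : HasDerivAt (fun y : ℝ => -α * y) (-α) x := by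
      simpa using (hasDerivAt_id x).const_mul (-α)
    have h3 := (((Real.hasDerivAt_exp (-α * x)).comp x h1).div_const α).neg
    have e1 : (fun y => -Real.exp (-α * y) / α) = fun y => -(Real.exp (-α * y) / α) := by
      funext y; rw [neg_div]
    rw [e1]
    exact h3.congr_deriv (by rw [mul_neg, neg_div, neg_neg, mul_div_assoc, div_self hα.ne', mul_one])
  have ht : Tendsto (fun y => -Real.exp (-α * y) / α) atTop (𝓝 0) := by
    have h1 : Tendsto (fun y : ℝ => α * y) atTop atTop :=
      Tendsto.const_mul_atTop hα tendsto_id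
    have h2 := (Real.tendsto_exp_neg_atTop_nhds_zero.comp h1).div_const α |>.neg
    simpa [neg_mul, Function.comp, neg_div] using h2
  have h := integral_Ioi_of_hasDerivAt_of_tendsto' hd (exp_neg_integrableOn_Ioi 0 hα) ht
  rw [h]
  simp [Real.exp_zero]
  ring_nf

private lemma expconv_meas_sub (t : ℝ) :
    MeasurePreserving (fun u : ℝ => t - u) volume volume := by
  have h := (measurePreserving_add_left (volume : Measure ℝ) t).comp
    (Measure.measurePreserving_neg (volume : Measure ℝ))
  simpa [Function.comp_def, sub_eq_add_neg] using h

private lemma expconv_emb_sub (t : ℝ) : MeasurableEmbedding (fun u : ℝ => t - u) := by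
  have h : (fun u : ℝ => t - u) = fun u : ℝ => t + (-u) := by funext u; ring
  rw [h]
  exact ((MeasurableEquiv.neg ℝ).trans (MeasurableEquiv.addLeft t)).measurableEmbedding

private lemma expconv_emb_add (t : ℝ) : MeasurableEmbedding (fun u : ℝ => t + u) :=
  (MeasurableEquiv.addLeft t).measurableEmbedding

private lemma expconv_esm (_t : ℝ) :
    AEStronglyMeasurable (fun u : ℝ => (Real.exp (-α * u) : ℂ))
      (volume.restrict (Set.Ioi (0 : ℝ))) :=
  (Complex.continuous_ofReal.comp
    (Real.continuous_exp.comp (continuous_const.mul continuous_id))).aestronglyMeasurable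

private lemma expconv_norm_le {h : ℝ → ℂ} {C : ℝ} (hC : ∀ u, ‖h u‖ ≤ C) (u : ℝ) :
    ‖(Real.exp (-α * u) : ℂ) * h u‖ ≤ C * Real.exp (-α * u) := by
  rw [norm_mul, Complex.norm_real, Real.norm_eq_abs, Real.abs_exp, mul_comm C]
  exact mul_le_mul_of_nonneg_left (hC u) (Real.exp_nonneg _)

private lemma expconv_core_int (hα : 0 < α) {h : ℝ → ℂ} (hm : Measurable h)
    {C : ℝ} (hC : ∀ u, ‖h u‖ ≤ C) :
    IntegrableOn (fun u => (Real.exp (-α * u) : ℂ) * h u) (Set.Ioi 0) :=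
  Integrable.mono' ((expconv_exp_int hα).const_mul C)
    ((expconv_esm 0).mul hm.aestronglyMeasurable)
    (ae_of_all _ fun u => expconv_norm_le hC u)

private lemma expconv_core_norm (hα : 0 < α) {h : ℝ → ℂ} {C : ℝ} (hC : ∀ u, ‖h u‖ ≤ C) :
    ‖∫ u in Set.Ioi (0 : ℝ), (Real.exp (-α * u) : ℂ) * h u‖ ≤ C / α := by
  calc ‖∫ u in Set.Ioi (0 : ℝ), (Real.exp (-α * u) : ℂ) * h u‖
      ≤ ∫ u in Set.Ioi (0 : ℝ), ‖(Real.exp (-α * u) : ℂ) * h u‖ :=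
        norm_integral_le_integral_norm _
    _ ≤ ∫ u in Set.Ioi (0 : ℝ), C * Real.exp (-α * u) :=
        integral_mono_of_nonneg (ae_of_all _ fun u => norm_nonneg _)
          ((expconv_exp_int hα).const_mul C) (ae_of_all _ fun u => expconv_norm_le hC u)
    _ = C / α := by rw [integral_const_mul, expconv_exp_val hα, mul_one_div]

private lemma expconv_core_tendsto (hα : 0 < α) {h : ℕ → ℝ → ℂ} {g : ℝ → ℂ}
    (hm : ∀ n, Measurable (h n)) {C : ℝ} (hC : ∀ n u, ‖h n u‖ ≤ C)
    (hlim : ∀ u, Tendsto (fun n => h n u) atTop (𝓝 (g u))) :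
    Tendsto (fun n => ∫ u in Set.Ioi (0 : ℝ), (Real.exp (-α * u) : ℂ) * h n u) atTop
      (𝓝 (∫ u in Set.Ioi (0 : ℝ), (Real.exp (-α * u) : ℂ) * g u)) := by
  refine tendsto_integral_of_dominated_convergence (fun u => C * Real.exp (-α * u))
    (fun n => (expconv_esm 0).mul (hm n).aestronglyMeasurable)
    ((expconv_exp_int hα).const_mul C)
    (fun n => ae_of_all _ fun u => expconv_norm_le (hC n) u)
    (ae_of_all _ fun u => (hlim u).const_mul _)

private lemma expconv_core_cont_sub (hα : 0 < α) {f : ℝ → ℂ} (hf : Continuous f)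
    {C : ℝ} (hC : ∀ u, ‖f u‖ ≤ C) :
    Continuous fun t => ∫ u in Set.Ioi (0 : ℝ), (Real.exp (-α * u) : ℂ) * f (t - u) := by
  refine continuous_of_dominated
    (fun t => (expconv_esm 0).mul
      ((hf.comp (continuous_const.sub continuous_id)).aestronglyMeasurable))
    (fun t => ae_of_all _ fun u => expconv_norm_le (fun u => hC (t - u)) u)
    ((expconv_exp_int hα).const_mul C)
    (ae_of_all _ fun u => continuous_const.mul (hf.comp (continuous_id.sub continuous_const)))

private lemma expconv_core_cont_add (hα : 0 < α) {f : ℝ → ℂ} (hf : Continuous f)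
    {C : ℝ} (hC : ∀ u, ‖f u‖ ≤ C) :
    Continuous fun t => ∫ u in Set.Ioi (0 : ℝ), (Real.exp (-α * u) : ℂ) * f (t + u) := by
  refine continuous_of_dominated
    (fun t => (expconv_esm 0).mul
      ((hf.comp (continuous_const.add continuous_id)).aestronglyMeasurable))
    (fun t => ae_of_all _ fun u => expconv_norm_le (fun u => hC (t + u)) u)
    ((expconv_exp_int hα).const_mul C)
    (ae_of_all _ fun u => continuous_const.mul (hf.comp (continuous_id.add continuous_const)))

private lemma expconv_img_sub (t : ℝ) : (fun u : ℝ => t - u) '' Set.Ioi 0 = Set.Iio t := by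
  rw [Set.image_const_sub_Ioi]; simp

private lemma expconv_img_add (t : ℝ) : (fun u : ℝ => t + u) '' Set.Ioi 0 = Set.Ioi t := by
  rw [Set.image_const_add_Ioi]; simp

private lemma expconv_cv1 (t : ℝ) (f : ℝ → ℂ) :
    ∫ s in Set.Iic t, (Real.exp (-α * (t - s)) : ℂ) * f s
      = ∫ u in Set.Ioi (0 : ℝ), (Real.exp (-α * u) : ℂ) * f (t - u) := by
  rw [integral_Iic_eq_integral_Iio, ← expconv_img_sub t,
    (expconv_meas_sub t).setIntegral_image_emb (expconv_emb_sub t)]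
  simp only [sub_sub_cancel]

private lemma expconv_cv2 (t : ℝ) (f : ℝ → ℂ) :
    ∫ s in Set.Ici t, (Real.exp (α * (t - s)) : ℂ) * f s
      = ∫ u in Set.Ioi (0 : ℝ), (Real.exp (-α * u) : ℂ) * f (t + u) := by
  rw [integral_Ici_eq_integral_Ioi, ← expconv_img_add t,
    (measurePreserving_add_left volume t).setIntegral_image_emb (expconv_emb_add t)]
  simp only [sub_add_cancel_left, mul_neg, neg_mul]

private lemma expconv_int1 (hα : 0 < α) {f : ℝ → ℂ} (hm : Measurable f)
    {C : ℝ} (hC : ∀ u, ‖f u‖ ≤ C) (t : ℝ) :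
    IntegrableOn (fun s => (Real.exp (-α * (t - s)) : ℂ) * f s) (Set.Iic t) := by
  have base : IntegrableOn (fun u => (Real.exp (-α * u) : ℂ) * f (t - u)) (Set.Ioi 0) :=
    expconv_core_int hα (hm.comp (measurable_const.sub measurable_id)) fun u => hC (t - u)
  have mp := (expconv_meas_sub t).restrict_image_emb (expconv_emb_sub t) (Set.Ioi 0)
  rw [expconv_img_sub t] at mp
  have key : Integrable
      ((fun s => (Real.exp (-α * (t - s)) : ℂ) * f s) ∘ (fun u : ℝ => t - u))
      (volume.restrict (Set.Ioi 0)) := by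
    simpa only [IntegrableOn, Function.comp_def, sub_sub_cancel] using base
  have hIio : IntegrableOn (fun s => (Real.exp (-α * (t - s)) : ℂ) * f s) (Set.Iio t) :=
    (mp.integrable_comp_emb (expconv_emb_sub t)).mp key
  exact hIio.congr_set_ae (Iio_ae_eq_Iic (μ := volume) (a := t)).symm |>.congr_set_ae
    (by rfl)

private lemma expconv_int2 (hα : 0 < α) {f : ℝ → ℂ} (hm : Measurable f)
    {C : ℝ} (hC : ∀ u, ‖f u‖ ≤ C) (t : ℝ) :
    IntegrableOn (fun s => (Real.exp (α * (t - s)) : ℂ) * f s) (Set.Ici t) := by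
  have base : IntegrableOn (fun u => (Real.exp (-α * u) : ℂ) * f (t + u)) (Set.Ioi 0) :=
    expconv_core_int hα (hm.comp (measurable_const.add measurable_id)) fun u => hC (t + u)
  have mp := (measurePreserving_add_left (volume : Measure ℝ) t).restrict_image_emb
    (expconv_emb_add t) (Set.Ioi 0)
  rw [expconv_img_add t] at mp
  have key : Integrable
      ((fun s => (Real.exp (α * (t - s)) : ℂ) * f s) ∘ (fun u : ℝ => t + u))
      (volume.restrict (Set.Ioi 0)) := by
    simpa only [IntegrableOn, Function.comp_def, sub_add_cancel_left, mul_neg, neg_mul] using base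
  have hIoi : IntegrableOn (fun s => (Real.exp (α * (t - s)) : ℂ) * f s) (Set.Ioi t) :=
    (mp.integrable_comp_emb (expconv_emb_add t)).mp key
  exact hIoi.congr_set_ae (Ioi_ae_eq_Ici (μ := volume) (a := t)).symm

end ExpConvAux

theorem exponential_convolutions_preserve_almost_automorphic
    (α : ℝ) (hα : 0 < α)
    (φ : ℝ → ℂ) (hφc : Continuous φ) (hφb : ∃ C, ∀ t, ‖φ t‖ ≤ C)
    (hφaa : AlmostAutomorphic φ) :
    (∀ t : ℝ, IntegrableOn (fun s => (Real.exp (-α * (t - s)) : ℂ) * φ s) (Set.Iic t)) ∧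
    (∀ t : ℝ, IntegrableOn (fun s => (Real.exp (α * (t - s)) : ℂ) * φ s) (Set.Ici t)) ∧
    Continuous (fun t => ∫ s in Set.Iic t, (Real.exp (-α * (t - s)) : ℂ) * φ s) ∧
    Continuous (fun t => ∫ s in Set.Ici t, (Real.exp (α * (t - s)) : ℂ) * φ s) ∧
    (∀ t : ℝ, ‖∫ s in Set.Iic t, (Real.exp (-α * (t - s)) : ℂ) * φ s‖ ≤ (⨆ t : ℝ, ‖φ t‖) / α) ∧
    (∀ t : ℝ, ‖∫ s in Set.Ici t, (Real.exp (α * (t - s)) : ℂ) * φ s‖ ≤ (⨆ t : ℝ, ‖φ t‖) / α) ∧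
    AlmostAutomorphic (fun t => ∫ s in Set.Iic t, (Real.exp (-α * (t - s)) : ℂ) * φ s) ∧
    AlmostAutomorphic (fun t => ∫ s in Set.Ici t, (Real.exp (α * (t - s)) : ℂ) * φ s) := by
  obtain ⟨C₀, hC₀⟩ := hφb
  have hbdd : BddAbove (Set.range fun t => ‖φ t‖) := ⟨C₀, by rintro x ⟨t, rfl⟩; exact hC₀ t⟩
  set C : ℝ := ⨆ t : ℝ, ‖φ t‖ with hCdef
  have hC : ∀ t, ‖φ t‖ ≤ C := fun t => le_ciSup hbdd t
  have hφm : Measurable φ := hφc.measurable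
  -- rewrite both convolutions as integrals over `Ioi 0`
  have hG : (fun t => ∫ s in Set.Iic t, (Real.exp (-α * (t - s)) : ℂ) * φ s)
      = fun t => ∫ u in Set.Ioi (0 : ℝ), (Real.exp (-α * u) : ℂ) * φ (t - u) :=
    funext fun t => expconv_cv1 t φ
  have hH : (fun t => ∫ s in Set.Ici t, (Real.exp (α * (t - s)) : ℂ) * φ s)
      = fun t => ∫ u in Set.Ioi (0 : ℝ), (Real.exp (-α * u) : ℂ) * φ (t + u) :=
    funext fun t => expconv_cv2 t φ
  have hcont1 : Continuous (fun t => ∫ s in Set.Iic t, (Real.exp (-α * (t - s)) : ℂ) * φ s) := by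
    rw [hG]; exact expconv_core_cont_sub hα hφc hC
  have hcont2 : Continuous (fun t => ∫ s in Set.Ici t, (Real.exp (α * (t - s)) : ℂ) * φ s) := by
    rw [hH]; exact expconv_core_cont_add hα hφc hC
  refine ⟨expconv_int1 hα hφm hC, expconv_int2 hα hφm hC, hcont1, hcont2, ?_, ?_, ?_, ?_⟩
  · intro t
    rw [expconv_cv1 t φ]
    exact expconv_core_norm hα fun u => hC (t - u)
  · intro t
    rw [expconv_cv2 t φ]
    exact expconv_core_norm hα fun u => hC (t + u)
  · -- almost automorphy of L₁
    refine ⟨hcont1, fun σ => ?_⟩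
    obtain ⟨k, hk, φt, h1, h2⟩ := hφaa.2 σ
    have hφtm : Measurable φt :=
      measurable_of_tendsto_metrizable
        (fun n => (hφc.comp (continuous_id.add continuous_const)).measurable)
        (tendsto_pi_nhds.mpr h1)
    have hφtb : ∀ t, ‖φt t‖ ≤ C := fun t =>
      le_of_tendsto (h1 t).norm (Eventually.of_forall fun n => hC _)
    refine ⟨k, hk, fun t => ∫ u in Set.Ioi (0 : ℝ), (Real.exp (-α * u) : ℂ) * φt (t - u),
      ?_, ?_⟩
    · intro t
      simp only [expconv_cv1]
      refine expconv_core_tendsto hα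
        (fun n => hφm.comp (measurable_const.sub measurable_id)) (C := C)
        (fun n u => hC _) (fun u => ?_)
      have := h1 (t - u)
      simp only [sub_add_eq_add_sub] at this
      simpa [add_sub_right_comm] using this
    · intro t
      simp only [expconv_cv1]
      refine expconv_core_tendsto hα
        (fun n => hφtm.comp (measurable_const.sub measurable_id)) (C := C)
        (fun n u => hφtb _) (fun u => ?_)
      have := h2 (t - u)
      simpa [sub_right_comm] using this
  · -- almost automorphy of L₂
    refine ⟨hcont2, fun σ => ?_⟩
    obtain ⟨k, hk, φt, h1, h2⟩ := hφaa.2 σ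
    have hφtm : Measurable φt :=
      measurable_of_tendsto_metrizable
        (fun n => (hφc.comp (continuous_id.add continuous_const)).measurable)
        (tendsto_pi_nhds.mpr h1)
    have hφtb : ∀ t, ‖φt t‖ ≤ C := fun t =>
      le_of_tendsto (h1 t).norm (Eventually.of_forall fun n => hC _)
    refine ⟨k, hk, fun t => ∫ u in Set.Ioi (0 : ℝ), (Real.exp (-α * u) : ℂ) * φt (t + u),
      ?_, ?_⟩
    · intro t
      simp only [expconv_cv2]
      refine expconv_core_tendsto hα
        (fun n => hφm.comp (measurable_const.add measurable_id)) (C := C)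
        (fun n u => hC _) (fun u => ?_)
      have := h1 (t + u)
      simpa [add_right_comm] using this
    · intro t
      simp only [expconv_cv2]
      refine expconv_core_tendsto hα
        (fun n => hφtm.comp (measurable_const.add measurable_id)) (C := C)
        (fun n u => hφtb _) (fun u => ?_)
      have := h2 (t + u)
      simpa [sub_add_eq_add_sub] using this
end

section
/- Let A, B : ℝ → Matrix (Fin p) (Fin p) ℂ be continuous and let Φ_A, Φ_B be fundamental matrices of y' = A(t)y and y' = B(t)y respectively. Then for all t, s, ξ ∈ ℝ: (i) Ψ_A(t,s) − Ψ_B(t,s) = ∫_s^t Ψ_B(t,r)·(A(r) − B(r))·Ψ_A(r,s) dr; and (ii) Ψ_A(t+ξ, s+ξ) − Ψ_B(t,s) = ∫_s^t Ψ_B(t,r)·(A(r+ξ) − B(r))·Ψ_A(r+ξ, s+ξ) dr. -/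
open MeasureTheory Filter Topology

attribute [local instance] Matrix.linftyOpNormedAddCommGroup Matrix.linftyOpNormedRing
  Matrix.linftyOpNormedAlgebra

/-- `Φ` is a fundamental matrix of `y' = A(t) y`: it is differentiable with
`Φ'(t) = A(t) Φ(t)` and `Φ(t)` invertible for every `t`. -/
def IsFundamentalMatrix {p : ℕ} (A Φ : ℝ → Matrix (Fin p) (Fin p) ℂ) : Prop :=
  (∀ t : ℝ, HasDerivAt Φ (A t * Φ t) t) ∧ ∀ t : ℝ, IsUnit (Φ t)

private lemma vop_key {p : ℕ}
    (A B ΦA ΦB : ℝ → Matrix (Fin p) (Fin p) ℂ)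
    (hA : Continuous A) (hB : Continuous B)
    (hΦA : IsFundamentalMatrix A ΦA) (hΦB : IsFundamentalMatrix B ΦB) (t s : ℝ) :
    ΦA t * (ΦA s)⁻¹ - ΦB t * (ΦB s)⁻¹ =
      ∫ r in s..t, ΦB t * (ΦB r)⁻¹ * (A r - B r) * (ΦA r * (ΦA s)⁻¹) := by
  have hinvB : ∀ r : ℝ, HasDerivAt (fun r => (ΦB r)⁻¹)
      (-((ΦB r)⁻¹ * (B r * ΦB r) * (ΦB r)⁻¹)) r := by
    intro r
    have hu := hΦB.2 r
    have hfd : HasFDerivAt Ring.inverse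
        (-ContinuousLinearMap.mulLeftRight ℝ _ (↑hu.unit⁻¹) (↑hu.unit⁻¹)) (ΦB r) := by
      have := hasFDerivAt_ringInverse (𝕜 := ℝ) hu.unit
      rwa [hu.unit_spec] at this
    have h1 : HasDerivAt (fun r => Ring.inverse (ΦB r))
        ((-ContinuousLinearMap.mulLeftRight ℝ _ (↑hu.unit⁻¹) (↑hu.unit⁻¹)) (B r * ΦB r)) r :=
      hfd.comp_hasDerivAt r (hΦB.1 r)
    have hiu : (↑hu.unit⁻¹ : Matrix (Fin p) (Fin p) ℂ) = (ΦB r)⁻¹ :=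
      ((Ring.inverse_unit hu.unit).symm.trans (congrArg Ring.inverse hu.unit_spec)).trans
        (Matrix.nonsing_inv_eq_ringInverse _).symm
    simpa [Matrix.nonsing_inv_eq_ringInverse, hiu,
      ContinuousLinearMap.neg_apply, ContinuousLinearMap.mulLeftRight_apply] using h1
  have hF : ∀ r : ℝ, HasDerivAt (fun r => (ΦB r)⁻¹ * ΦA r)
      ((ΦB r)⁻¹ * (A r - B r) * ΦA r) r := by
    intro r
    have h := (hinvB r).mul (hΦA.1 r)
    convert h using 1
    case e'_4 => rfl
    case e'_5 => rfl
    case e'_6 => rfl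
    case e'_8 => rfl
    have h1 : ΦB r * (ΦB r)⁻¹ = 1 :=
      Matrix.mul_nonsing_inv _ ((Matrix.isUnit_iff_isUnit_det _).mp (hΦB.2 r))
    have h2 : (ΦB r)⁻¹ * (B r * ΦB r) * (ΦB r)⁻¹ = (ΦB r)⁻¹ * B r := by
      rw [← mul_assoc, mul_assoc ((ΦB r)⁻¹ * B r), h1, mul_one]
    rw [h2]
    noncomm_ring
  have hdA : Differentiable ℝ ΦA := fun r => (hΦA.1 r).differentiableAt
  have hcA : Continuous ΦA := hdA.continuous
  have hdBi : Differentiable ℝ fun r => (ΦB r)⁻¹ := fun r => (hinvB r).differentiableAt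
  have hcBi : Continuous fun r => (ΦB r)⁻¹ := hdBi.continuous
  have hcont : Continuous fun r => (ΦB r)⁻¹ * (A r - B r) * ΦA r :=
    ((hcBi.mul (hA.sub hB)).mul hcA)
  have hFTC : (∫ r in s..t, (ΦB r)⁻¹ * (A r - B r) * ΦA r)
      = (ΦB t)⁻¹ * ΦA t - (ΦB s)⁻¹ * ΦA s :=
    intervalIntegral.integral_eq_sub_of_hasDerivAt (fun r _ => hF r)
      (hcont.intervalIntegrable s t)
  set L : Matrix (Fin p) (Fin p) ℂ →L[ℝ] Matrix (Fin p) (Fin p) ℂ :=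
    ContinuousLinearMap.mulLeftRight ℝ (Matrix (Fin p) (Fin p) ℂ) (ΦB t) ((ΦA s)⁻¹) with hL
  have hcomm : (∫ r in s..t, L ((ΦB r)⁻¹ * (A r - B r) * ΦA r))
      = L (∫ r in s..t, (ΦB r)⁻¹ * (A r - B r) * ΦA r) :=
    L.intervalIntegral_comp_comm (hcont.intervalIntegrable s t)
  have hLapp : ∀ X, L X = ΦB t * X * (ΦA s)⁻¹ := fun X =>
    ContinuousLinearMap.mulLeftRight_apply ℝ _ _ _ _
  have hre : (∫ r in s..t, ΦB t * (ΦB r)⁻¹ * (A r - B r) * (ΦA r * (ΦA s)⁻¹))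
      = ∫ r in s..t, L ((ΦB r)⁻¹ * (A r - B r) * ΦA r) := by
    congr 1; funext r; rw [hLapp]; noncomm_ring
  rw [hre, hcomm, hFTC, hLapp]
  have h1 : ΦB t * (ΦB t)⁻¹ = 1 :=
    Matrix.mul_nonsing_inv _ ((Matrix.isUnit_iff_isUnit_det _).mp (hΦB.2 t))
  have h2 : ΦA s * (ΦA s)⁻¹ = 1 :=
    Matrix.mul_nonsing_inv _ ((Matrix.isUnit_iff_isUnit_det _).mp (hΦA.2 s))
  rw [mul_sub, sub_mul]
  congr 1
  · rw [← mul_assoc, h1, one_mul]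
  · rw [mul_assoc, mul_assoc ((ΦB s)⁻¹), h2, mul_one]

theorem variation_of_parameters_identities {p : ℕ}
    (A B ΦA ΦB : ℝ → Matrix (Fin p) (Fin p) ℂ)
    (hA : Continuous A) (hB : Continuous B)
    (hΦA : IsFundamentalMatrix A ΦA) (hΦB : IsFundamentalMatrix B ΦB) :
    (∀ t s : ℝ,
      ΦA t * (ΦA s)⁻¹ - ΦB t * (ΦB s)⁻¹ =
        ∫ r in s..t, ΦB t * (ΦB r)⁻¹ * (A r - B r) * (ΦA r * (ΦA s)⁻¹)) ∧
    (∀ t s ξ : ℝ,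
      ΦA (t + ξ) * (ΦA (s + ξ))⁻¹ - ΦB t * (ΦB s)⁻¹ =
        ∫ r in s..t, ΦB t * (ΦB r)⁻¹ * (A (r + ξ) - B r) * (ΦA (r + ξ) * (ΦA (s + ξ))⁻¹)) := by
  constructor
  · exact fun t s => vop_key A B ΦA ΦB hA hB hΦA hΦB t s
  · intro t s ξ
    have hA' : Continuous fun r : ℝ => A (r + ξ) :=
      hA.comp (continuous_id.add continuous_const)
    have hΦA' : IsFundamentalMatrix (fun r => A (r + ξ)) (fun r => ΦA (r + ξ)) := by
      refine ⟨fun r => ?_, fun r => hΦA.2 (r + ξ)⟩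
      exact (hΦA.1 (r + ξ)).comp_add_const r ξ
    exact vop_key (fun r => A (r + ξ)) B (fun r => ΦA (r + ξ)) ΦB hA' hB hΦA' hΦB t s
end

section
/- Let A : ℝ → Matrix (Fin p) (Fin p) ℂ be bounded and continuous with fundamental matrix Φ_A, let P be a constant matrix with P² = P that commutes with Φ_A(t) for every t ∈ ℝ, and suppose there are constants c, α > 0 with ‖Ψ_A(t,s)·P‖ ≤ c·e^{−α(t−s)} for all t ≥ s. Then there exist constants c₁ > 0 and α' ∈ (0, α) such that for every ξ ∈ ℝ and all t ≥ s, ‖Ψ_A(t+ξ, s+ξ)·P − Ψ_A(t,s)·P‖ ≤ c₁ · (sup_{r∈ℝ} ‖A(r+ξ) − A(r)‖) · e^{−α'(t−s)}. In particular, if sup_{r∈ℝ} ‖A(r+ξ) − A(r)‖ ≤ ε then ‖Ψ_A(t+ξ, s+ξ)·P − Ψ_A(t,s)·P‖ ≤ c₁·ε·e^{−α'(t−s)} for all t ≥ s. -/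
open MeasureTheory Filter Topology

attribute [local instance] Matrix.linftyOpNormedAddCommGroup Matrix.linftyOpNormedRing
  Matrix.linftyOpNormedAlgebra

lemma inv_hasDerivAt {p : ℕ} (A ΦA : ℝ → Matrix (Fin p) (Fin p) ℂ)
    (hd : ∀ t : ℝ, HasDerivAt ΦA (A t * ΦA t) t) (hu : ∀ t : ℝ, IsUnit (ΦA t)) (t : ℝ) :
    HasDerivAt (fun r => (ΦA r)⁻¹) (-((ΦA t)⁻¹ * A t)) t := by
  have hmul : ΦA t * (ΦA t)⁻¹ = 1 :=
    Matrix.mul_nonsing_inv _ ((Matrix.isUnit_iff_isUnit_det _).mp (hu t))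
  have hcoe : (((hu t).unit⁻¹ : (Matrix (Fin p) (Fin p) ℂ)ˣ) : Matrix (Fin p) (Fin p) ℂ)
      = (ΦA t)⁻¹ := by rw [Matrix.coe_units_inv, (hu t).unit_spec]
  have h1 : HasFDerivAt Ring.inverse
      (-(ContinuousLinearMap.mulLeftRight ℝ _ ((ΦA t)⁻¹) ((ΦA t)⁻¹))) (ΦA t) := by
    have := hasFDerivAt_ringInverse (𝕜 := ℝ) (hu t).unit
    rw [hcoe, (hu t).unit_spec] at this
    exact this
  have h2 := h1.comp_hasDerivAt t (hd t)
  have h3 : Ring.inverse ∘ ΦA = fun r => (ΦA r)⁻¹ := by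
    funext r; exact (Matrix.nonsing_inv_eq_ringInverse _).symm
  rw [h3] at h2
  refine h2.congr_deriv ?_
  simp only [ContinuousLinearMap.neg_apply, ContinuousLinearMap.mulLeftRight_apply]
  rw [← mul_assoc, mul_assoc ((ΦA t)⁻¹ * A t), hmul, mul_one]

theorem bi_almost_periodicity_of_dichotomic_evolution {p : ℕ}
    (A ΦA : ℝ → Matrix (Fin p) (Fin p) ℂ)
    (hAc : Continuous A) (hAb : ∃ C, ∀ t, ‖A t‖ ≤ C)
    (hΦA : IsFundamentalMatrix A ΦA)
    (P : Matrix (Fin p) (Fin p) ℂ) (hP : P * P = P)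
    (hPcomm : ∀ t : ℝ, ΦA t * P = P * ΦA t)
    (c α : ℝ) (hc : 0 < c) (hα : 0 < α)
    (hdich : ∀ t s : ℝ, s ≤ t → ‖ΦA t * (ΦA s)⁻¹ * P‖ ≤ c * Real.exp (-α * (t - s))) :
    ∃ c₁ > (0 : ℝ), ∃ α' : ℝ, 0 < α' ∧ α' < α ∧
      (∀ ξ : ℝ, ∀ t s : ℝ, s ≤ t →
        ‖ΦA (t + ξ) * (ΦA (s + ξ))⁻¹ * P - ΦA t * (ΦA s)⁻¹ * P‖ ≤
          c₁ * (⨆ r : ℝ, ‖A (r + ξ) - A r‖) * Real.exp (-α' * (t - s))) ∧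
      (∀ ξ ε : ℝ, (∀ r : ℝ, ‖A (r + ξ) - A r‖ ≤ ε) → ∀ t s : ℝ, s ≤ t →
        ‖ΦA (t + ξ) * (ΦA (s + ξ))⁻¹ * P - ΦA t * (ΦA s)⁻¹ * P‖ ≤
          c₁ * ε * Real.exp (-α' * (t - s))) := by
  obtain ⟨hΦd, hΦu⟩ := hΦA
  obtain ⟨C, hC⟩ := hAb
  have hinv : ∀ t : ℝ, HasDerivAt (fun r => (ΦA r)⁻¹) (-((ΦA t)⁻¹ * A t)) t :=
    inv_hasDerivAt A ΦA hΦd hΦu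
  have hΦc : Continuous ΦA := continuous_iff_continuousAt.2 fun t => (hΦd t).continuousAt
  have hinvc : Continuous (fun r => (ΦA r)⁻¹) :=
    continuous_iff_continuousAt.2 fun t => (hinv t).continuousAt
  have hmulinv : ∀ u : ℝ, ΦA u * (ΦA u)⁻¹ = 1 := fun u =>
    Matrix.mul_nonsing_inv _ ((Matrix.isUnit_iff_isUnit_det _).mp (hΦu u))
  have hinvmul : ∀ u : ℝ, (ΦA u)⁻¹ * ΦA u = 1 := fun u =>
    Matrix.nonsing_inv_mul _ ((Matrix.isUnit_iff_isUnit_det _).mp (hΦu u))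
  have hPinv : ∀ u : ℝ, P * (ΦA u)⁻¹ = (ΦA u)⁻¹ * P := by
    intro u
    calc P * (ΦA u)⁻¹ = (ΦA u)⁻¹ * ΦA u * P * (ΦA u)⁻¹ := by rw [hinvmul u, one_mul]
      _ = (ΦA u)⁻¹ * (ΦA u * P) * (ΦA u)⁻¹ := by rw [mul_assoc (ΦA u)⁻¹ (ΦA u) P]
      _ = (ΦA u)⁻¹ * (P * ΦA u) * (ΦA u)⁻¹ := by rw [hPcomm u]
      _ = (ΦA u)⁻¹ * P * (ΦA u * (ΦA u)⁻¹) := by simp only [mul_assoc]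
      _ = (ΦA u)⁻¹ * P := by rw [hmulinv u, mul_one]
  have habsorb : ∀ u v : ℝ, P * ΦA u * (ΦA v)⁻¹ * P = ΦA u * (ΦA v)⁻¹ * P := by
    intro u v
    rw [← hPcomm u, mul_assoc (ΦA u) P (ΦA v)⁻¹, hPinv v]
    simp only [mul_assoc]
    rw [hP]
  have key : ∀ ξ M : ℝ, 0 ≤ M → (∀ r : ℝ, ‖A (r + ξ) - A r‖ ≤ M) → ∀ t s : ℝ, s ≤ t →
      ‖ΦA (t + ξ) * (ΦA (s + ξ))⁻¹ * P - ΦA t * (ΦA s)⁻¹ * P‖ ≤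
        (2 * c ^ 2 / α) * M * Real.exp (-(α / 2) * (t - s)) := by
    intro ξ M hM hMb t s hst
    set g : ℝ → Matrix (Fin p) (Fin p) ℂ :=
      fun r => P * ΦA t * ((ΦA r)⁻¹ * ΦA (r + ξ)) * ((ΦA (s + ξ))⁻¹ * P) with hgdef
    set gd : ℝ → Matrix (Fin p) (Fin p) ℂ :=
      fun r => (ΦA t * (ΦA r)⁻¹ * P) * (A (r + ξ) - A r) *
        (ΦA (r + ξ) * (ΦA (s + ξ))⁻¹ * P) with hgddef
    have hshift : ∀ r : ℝ, HasDerivAt (fun u => ΦA (u + ξ)) (A (r + ξ) * ΦA (r + ξ)) r := by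
      intro r
      have := (hΦd (r + ξ)).scomp r ((hasDerivAt_id r).add_const ξ)
      simp at this
      exact this
    have hg : ∀ r : ℝ, HasDerivAt g (gd r) r := by
      intro r
      have hin : HasDerivAt (fun u => (ΦA u)⁻¹ * ΦA (u + ξ))
          ((-((ΦA r)⁻¹ * A r)) * ΦA (r + ξ) + (ΦA r)⁻¹ * (A (r + ξ) * ΦA (r + ξ))) r :=
        (hinv r).mul (hshift r)
      have h2 := (hin.const_mul (P * ΦA t)).mul_const ((ΦA (s + ξ))⁻¹ * P)
      refine h2.congr_deriv ?_
      have hD : (-((ΦA r)⁻¹ * A r)) * ΦA (r + ξ) + (ΦA r)⁻¹ * (A (r + ξ) * ΦA (r + ξ)) =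
          (ΦA r)⁻¹ * ((A (r + ξ) - A r) * ΦA (r + ξ)) := by noncomm_ring
      rw [hD, hgddef]
      have hmove : P * ΦA t * (ΦA r)⁻¹ = ΦA t * (ΦA r)⁻¹ * P := by
        rw [← hPcomm t, mul_assoc (ΦA t) P (ΦA r)⁻¹, hPinv r, ← mul_assoc]
      simp only [← mul_assoc]
      rw [hmove]
    have hgt : g t = ΦA (t + ξ) * (ΦA (s + ξ))⁻¹ * P := by
      rw [hgdef]
      simp only [← mul_assoc]
      rw [mul_assoc P (ΦA t) (ΦA t)⁻¹, hmulinv t, mul_one, habsorb (t + ξ) (s + ξ)]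
    have hgs : g s = ΦA t * (ΦA s)⁻¹ * P := by
      rw [hgdef]
      simp only [← mul_assoc]
      rw [mul_assoc (P * ΦA t * (ΦA s)⁻¹) (ΦA (s + ξ)) (ΦA (s + ξ))⁻¹, hmulinv (s + ξ),
        mul_one, habsorb t s]
    have hgdc : Continuous gd := by
      have h1 : Continuous fun r : ℝ => A (r + ξ) - A r :=
        (hAc.comp (continuous_id.add continuous_const)).sub hAc
      have h2 : Continuous fun r : ℝ => ΦA t * (ΦA r)⁻¹ * P :=
        (continuous_const.mul hinvc).mul continuous_const
      have h3 : Continuous fun r : ℝ => ΦA (r + ξ) * (ΦA (s + ξ))⁻¹ * P :=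
        ((hΦc.comp (continuous_id.add continuous_const)).mul continuous_const).mul
          continuous_const
      exact (h2.mul h1).mul h3
    have hint : ΦA (t + ξ) * (ΦA (s + ξ))⁻¹ * P - ΦA t * (ΦA s)⁻¹ * P
        = ∫ r in s..t, gd r := by
      rw [← hgt, ← hgs]
      exact (intervalIntegral.integral_eq_sub_of_hasDerivAt (fun r _ => hg r)
        (hgdc.intervalIntegrable s t)).symm
    have hd0 : (0 : ℝ) ≤ t - s := sub_nonneg.2 hst
    have hbound : ∀ r ∈ Set.uIoc s t, ‖gd r‖ ≤ c * c * M * Real.exp (-α * (t - s)) := by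
      intro r hr
      rw [Set.uIoc_of_le hst] at hr
      have hrs : s ≤ r := hr.1.le
      have hrt : r ≤ t := hr.2
      have hX := hdich t r hrt
      have hZ := hdich (r + ξ) (s + ξ) (by linarith)
      rw [show r + ξ - (s + ξ) = r - s by ring] at hZ
      have hY := hMb r
      calc ‖gd r‖ ≤ ‖ΦA t * (ΦA r)⁻¹ * P * (A (r + ξ) - A r)‖ *
            ‖ΦA (r + ξ) * (ΦA (s + ξ))⁻¹ * P‖ := norm_mul_le _ _
        _ ≤ (‖ΦA t * (ΦA r)⁻¹ * P‖ * ‖A (r + ξ) - A r‖) *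
            ‖ΦA (r + ξ) * (ΦA (s + ξ))⁻¹ * P‖ :=
          mul_le_mul_of_nonneg_right (norm_mul_le _ _) (norm_nonneg _)
        _ ≤ (c * Real.exp (-α * (t - r)) * M) * (c * Real.exp (-α * (r - s))) := by
          apply mul_le_mul (mul_le_mul hX hY (norm_nonneg _) (by positivity)) hZ
            (norm_nonneg _) (by positivity)
        _ = c * c * M * (Real.exp (-α * (t - r)) * Real.exp (-α * (r - s))) := by ring
        _ = c * c * M * Real.exp (-α * (t - s)) := by
          rw [← Real.exp_add]; congr 1; ring
    have hxd : t - s ≤ 2 / α * Real.exp (α / 2 * (t - s)) := by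
      have h := Real.add_one_le_exp (α / 2 * (t - s))
      have h' : α / 2 * (t - s) ≤ Real.exp (α / 2 * (t - s)) := by linarith
      calc t - s = 2 / α * (α / 2 * (t - s)) := by field_simp
        _ ≤ 2 / α * Real.exp (α / 2 * (t - s)) :=
          mul_le_mul_of_nonneg_left h' (by positivity)
    calc ‖ΦA (t + ξ) * (ΦA (s + ξ))⁻¹ * P - ΦA t * (ΦA s)⁻¹ * P‖
        = ‖∫ r in s..t, gd r‖ := by rw [hint]
      _ ≤ c * c * M * Real.exp (-α * (t - s)) * |t - s| :=
        intervalIntegral.norm_integral_le_of_norm_le_const hbound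
      _ = c * c * M * Real.exp (-α * (t - s)) * (t - s) := by rw [abs_of_nonneg hd0]
      _ ≤ c * c * M * Real.exp (-α * (t - s)) * (2 / α * Real.exp (α / 2 * (t - s))) :=
        mul_le_mul_of_nonneg_left hxd (by positivity)
      _ = 2 * c ^ 2 / α * M * (Real.exp (-α * (t - s)) * Real.exp (α / 2 * (t - s))) := by
        ring
      _ = 2 * c ^ 2 / α * M * Real.exp (-(α / 2) * (t - s)) := by
        rw [← Real.exp_add]; congr 1; ring
  refine ⟨2 * c ^ 2 / α, by positivity, α / 2, by positivity, by linarith, ?_, ?_⟩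
  · intro ξ t s hst
    have hbdd : BddAbove (Set.range fun r : ℝ => ‖A (r + ξ) - A r‖) := by
      refine ⟨C + C, ?_⟩
      rintro x ⟨r, rfl⟩
      exact (norm_sub_le _ _).trans (add_le_add (hC _) (hC _))
    have hle : ∀ r : ℝ, ‖A (r + ξ) - A r‖ ≤ ⨆ r : ℝ, ‖A (r + ξ) - A r‖ := fun r =>
      le_ciSup hbdd r
    exact key ξ _ ((norm_nonneg _).trans (hle 0)) hle t s hst
  · intro ξ ε hε t s hst
    exact key ξ ε ((norm_nonneg _).trans (hε 0)) hε t s hst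
end

section
/- Let V be a complex Banach space with the Bohl–Bohr property, let a : ℝ → ℝ be bounded, continuous and almost automorphic such that t ↦ ∫_0^t a(s) ds is bounded on ℝ, and let f : ℝ → V be bounded, continuous and almost automorphic. Then every bounded differentiable solution y of y'(t) = i·a(t)·y(t) + f(t) on ℝ is almost automorphic, and it satisfies y(t) = exp(i·∫_0^t a(r) dr)·y(0) + ∫_0^t exp(i·∫_s^t a(r) dr)·f(s) ds for all t ∈ ℝ. -/
open MeasureTheory Filter Topology

/-- A Banach space `V` has the Bohl–Bohr property if every bounded primitive of an
almost automorphic function `ℝ → V` is almost automorphic. -/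
def BohlBohrSpace (V : Type*) [NormedAddCommGroup V] [NormedSpace ℂ V] : Prop :=
  ∀ f : ℝ → V, AlmostAutomorphic f →
    (∃ C, ∀ t : ℝ, ‖∫ s in (0 : ℝ)..t, f s‖ ≤ C) →
    AlmostAutomorphic (fun t => ∫ s in (0 : ℝ)..t, f s)

lemma aa_comp {V W : Type*} [NormedAddCommGroup V] [NormedAddCommGroup W]
    {F : V → W} (hF : Continuous F) {ψ : ℝ → V} (h : AlmostAutomorphic ψ) :
    AlmostAutomorphic (fun t => F (ψ t)) := by
  refine ⟨hF.comp h.1, fun σ => ?_⟩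
  obtain ⟨k, hk, ψt, h1, h2⟩ := h.2 σ
  exact ⟨k, hk, fun t => F (ψt t),
    fun t => (hF.tendsto _).comp (h1 t), fun t => (hF.tendsto _).comp (h2 t)⟩

lemma aa_pair {V W : Type*} [NormedAddCommGroup V] [NormedAddCommGroup W]
    {ψ : ℝ → V} {φ : ℝ → W} (hψ : AlmostAutomorphic ψ) (hφ : AlmostAutomorphic φ)
    (σ : ℕ → ℝ) : ∃ k : ℕ → ℕ, StrictMono k ∧ ∃ ψt : ℝ → V, ∃ φt : ℝ → W,
    (∀ t : ℝ, Tendsto (fun n => ψ (t + σ (k n))) atTop (𝓝 (ψt t))) ∧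
    (∀ t : ℝ, Tendsto (fun n => ψt (t - σ (k n))) atTop (𝓝 (ψ t))) ∧
    (∀ t : ℝ, Tendsto (fun n => φ (t + σ (k n))) atTop (𝓝 (φt t))) ∧
    (∀ t : ℝ, Tendsto (fun n => φt (t - σ (k n))) atTop (𝓝 (φ t))) := by
  obtain ⟨k₁, hk₁, ψt, h1, h2⟩ := hψ.2 σ
  obtain ⟨k₂, hk₂, φt, h3, h4⟩ := hφ.2 (σ ∘ k₁)
  exact ⟨k₁ ∘ k₂, hk₁.comp hk₂, ψt, φt,
    fun t => (h1 t).comp hk₂.tendsto_atTop,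
    fun t => (h2 t).comp hk₂.tendsto_atTop, h3, h4⟩

lemma aa_smul {V : Type*} [NormedAddCommGroup V] [NormedSpace ℂ V]
    {c : ℝ → ℂ} {v : ℝ → V} (hc : AlmostAutomorphic c) (hv : AlmostAutomorphic v) :
    AlmostAutomorphic (fun t => c t • v t) := by
  refine ⟨hc.1.smul hv.1, fun σ => ?_⟩
  obtain ⟨k, hk, ct, vt, h1, h2, h3, h4⟩ := aa_pair hc hv σ
  exact ⟨k, hk, fun t => ct t • vt t,
    fun t => (h1 t).smul (h3 t), fun t => (h2 t).smul (h4 t)⟩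

lemma aa_const_add {V : Type*} [NormedAddCommGroup V] (w : V)
    {ψ : ℝ → V} (h : AlmostAutomorphic ψ) : AlmostAutomorphic (fun t => w + ψ t) := by
  refine ⟨continuous_const.add h.1, fun σ => ?_⟩
  obtain ⟨k, hk, ψt, h1, h2⟩ := h.2 σ
  exact ⟨k, hk, fun t => w + ψt t,
    fun t => tendsto_const_nhds.add (h1 t), fun t => tendsto_const_nhds.add (h2 t)⟩

lemma aa_unsmul {V : Type*} [NormedAddCommGroup V] [NormedSpace ℝ V]
    {v : V} (hv : v ≠ 0) {ψ : ℝ → ℝ} (hc : Continuous ψ)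
    (h : AlmostAutomorphic (fun t => ψ t • v)) : AlmostAutomorphic ψ := by
  obtain ⟨g, hg1, hg2⟩ := exists_dual_vector ℝ v (norm_ne_zero_iff.2 hv)
  have hvn : ‖v‖ ≠ 0 := norm_ne_zero_iff.2 hv
  refine ⟨hc, fun σ => ?_⟩
  obtain ⟨k, hk, Ψ, h1, h2⟩ := h.2 σ
  have key : ∀ s : ℝ, g (ψ s • v) = ψ s * ‖v‖ := by
    intro s
    rw [ContinuousLinearMap.map_smul, smul_eq_mul, hg2]
    norm_num
  refine ⟨k, hk, fun t => g (Ψ t) / ‖v‖, fun t => ?_, fun t => ?_⟩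
  · have := (g.continuous.tendsto _).comp (h1 t)
    have h' : Tendsto (fun n => ψ (t + σ (k n)) * ‖v‖ / ‖v‖) atTop (𝓝 (g (Ψ t) / ‖v‖)) := by
      refine Tendsto.div_const ?_ _
      simpa [Function.comp_def, key] using this
    simpa [mul_div_assoc, div_self hvn] using h'
  · have := (g.continuous.tendsto _).comp (h2 t)
    have h' : Tendsto (fun n => g (Ψ (t - σ (k n))) / ‖v‖) atTop (𝓝 (ψ t * ‖v‖ / ‖v‖)) := by
      refine Tendsto.div_const ?_ _
      simpa [Function.comp_def, key] using this
    simpa [mul_div_assoc, div_self hvn] using h'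

theorem massera_scalar_imaginary_coefficient
    {V : Type*} [NormedAddCommGroup V] [NormedSpace ℂ V] [CompleteSpace V]
    (hV : BohlBohrSpace V)
    (a : ℝ → ℝ) (hac : Continuous a) (hab : ∃ C, ∀ t, |a t| ≤ C)
    (haaa : AlmostAutomorphic a)
    (haprim : ∃ C, ∀ t : ℝ, |∫ s in (0 : ℝ)..t, a s| ≤ C)
    (f : ℝ → V) (hfc : Continuous f) (hfb : ∃ C, ∀ t, ‖f t‖ ≤ C)
    (hfaa : AlmostAutomorphic f)
    (y : ℝ → V)
    (hy : ∀ t : ℝ, HasDerivAt y ((Complex.I * (a t : ℂ)) • y t + f t) t)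
    (hyb : ∃ C, ∀ t : ℝ, ‖y t‖ ≤ C) :
    AlmostAutomorphic y ∧
    ∀ t : ℝ, y t = Complex.exp (Complex.I * ((∫ r in (0 : ℝ)..t, a r : ℝ) : ℂ)) • y 0 +
      ∫ s in (0 : ℝ)..t, Complex.exp (Complex.I * ((∫ r in s..t, a r : ℝ) : ℂ)) • f s := by
  have hInt : ∀ s t : ℝ, IntervalIntegrable a volume s t := fun s t =>
    hac.intervalIntegrable s t
  set A : ℝ → ℝ := fun t => ∫ s in (0 : ℝ)..t, a s with hAdef
  have hA : ∀ t : ℝ, HasDerivAt A (a t) t := fun t =>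
    intervalIntegral.integral_hasDerivAt_right (hInt 0 t)
      hac.stronglyMeasurable.stronglyMeasurableAtFilter hac.continuousAt
  have hAc : Continuous A := continuous_iff_continuousAt.2 fun t => (hA t).continuousAt
  have hA0 : A 0 = 0 := intervalIntegral.integral_same
  set E : ℝ → ℂ := fun t => Complex.exp (Complex.I * (A t : ℂ)) with hEdef
  set E' : ℝ → ℂ := fun t => Complex.exp (-(Complex.I * (A t : ℂ))) with hE'def
  have hEmul : ∀ t, E t * E' t = 1 := by
    intro t
    rw [hEdef, hE'def, ← Complex.exp_add, add_neg_cancel, Complex.exp_zero]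
  have hE'c : Continuous E' := Complex.continuous_exp.comp
    ((continuous_const.mul (Complex.continuous_ofReal.comp hAc)).neg)
  have hEc : Continuous E := Complex.continuous_exp.comp
    (continuous_const.mul (Complex.continuous_ofReal.comp hAc))
  have hE'norm : ∀ t, ‖E' t‖ = 1 := by
    intro t
    simp [hE'def, Complex.norm_exp]
  have hgderiv : ∀ t : ℝ, HasDerivAt (fun t => E' t • y t) (E' t • f t) t := by
    intro t
    have hAt : HasDerivAt (fun t => -(Complex.I * (A t : ℂ)))
        (-(Complex.I * (a t : ℂ))) t := (((hA t).ofReal_comp).const_mul Complex.I).neg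
    have hE' : HasDerivAt E' (E' t * -(Complex.I * (a t : ℂ))) t := by
      simpa [hE'def] using hAt.cexp
    have h := hE'.smul (hy t)
    convert h using 1
    · rfl
    rw [smul_add, smul_smul]
    rw [add_comm ((E' t * (Complex.I * (a t : ℂ))) • y t), add_assoc, ← add_smul]
    rw [show E' t * (Complex.I * (a t : ℂ)) + E' t * -(Complex.I * (a t : ℂ)) = 0 by ring,
      zero_smul, add_zero]
  have hgc : Continuous (fun s => E' s • f s) := hE'c.smul hfc
  have key : ∀ t : ℝ, (∫ s in (0 : ℝ)..t, E' s • f s) = E' t • y t - y 0 := by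
    intro t
    have := intervalIntegral.integral_eq_sub_of_hasDerivAt
      (f := fun t => E' t • y t) (f' := fun t => E' t • f t)
      (fun s _ => hgderiv s) ((hgc.intervalIntegrable 0 t))
    rw [this]
    congr 1
    simp [hE'def, hA0]
  set G : ℝ → V := fun t => ∫ s in (0 : ℝ)..t, E' s • f s with hGdef
  have hy_eq : ∀ t, y t = E t • (y 0 + G t) := by
    intro t
    have h1 : y 0 + (E' t • y t - y 0) = E' t • y t := by abel
    have h2 : G t = E' t • y t - y 0 := key t
    rw [h2, h1, smul_smul, hEmul t, one_smul]
  have formula : ∀ t : ℝ, y t =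
      Complex.exp (Complex.I * ((∫ r in (0 : ℝ)..t, a r : ℝ) : ℂ)) • y 0 +
      ∫ s in (0 : ℝ)..t, Complex.exp (Complex.I * ((∫ r in s..t, a r : ℝ) : ℂ)) • f s := by
    intro t
    have hexp : ∀ s : ℝ,
        Complex.exp (Complex.I * ((∫ r in s..t, a r : ℝ) : ℂ)) = E t * E' s := by
      intro s
      rw [← intervalIntegral.integral_interval_sub_left (hInt 0 t) (hInt 0 s)]
      rw [hEdef, hE'def, ← Complex.exp_add]
      congr 1
      push_cast
      ring
    calc y t = E t • (y 0 + G t) := hy_eq t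
      _ = E t • y 0 + E t • G t := by rw [smul_add]
      _ = _ := by
          congr 1
          rw [hGdef, ← intervalIntegral.integral_smul]
          refine intervalIntegral.integral_congr fun s _ => ?_
          rw [hexp s, smul_smul]
  refine ⟨?_, formula⟩
  have hyc : Continuous y := continuous_iff_continuousAt.2 fun t => (hy t).continuousAt
  rcases subsingleton_or_nontrivial V with hsub | hnt
  · refine ⟨hyc, fun σ => ⟨id, strictMono_id, y, fun t => ?_, fun t => ?_⟩⟩ <;>
      exact tendsto_const_nhds.congr fun n => Subsingleton.elim _ _
  · obtain ⟨v, hv⟩ := exists_ne (0 : V)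
    have hav : AlmostAutomorphic (fun t => a t • v) :=
      aa_comp (F := fun x : ℝ => x • v) (continuous_id.smul continuous_const) haaa
    obtain ⟨C, hC⟩ := haprim
    have hAv : AlmostAutomorphic (fun t => A t • v) := by
      have := hV (fun t => a t • v) hav ⟨C * ‖v‖, fun t => by
        rw [intervalIntegral.integral_smul_const, norm_smul]
        exact mul_le_mul_of_nonneg_right (hC t) (norm_nonneg v)⟩
      simpa [intervalIntegral.integral_smul_const] using this
    have hAaa : AlmostAutomorphic A := aa_unsmul hv hAc hAv
    have hE'aa : AlmostAutomorphic E' :=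
      aa_comp (F := fun x : ℝ => Complex.exp (-(Complex.I * (x : ℂ))))
        (Complex.continuous_exp.comp
          ((continuous_const.mul Complex.continuous_ofReal).neg)) hAaa
    have hEaa : AlmostAutomorphic E :=
      aa_comp (F := fun x : ℝ => Complex.exp (Complex.I * (x : ℂ)))
        (Complex.continuous_exp.comp
          (continuous_const.mul Complex.continuous_ofReal)) hAaa
    have hgaa : AlmostAutomorphic (fun s => E' s • f s) := aa_smul hE'aa hfaa
    obtain ⟨Cy, hCy⟩ := hyb
    have hGb : ∃ C, ∀ t : ℝ, ‖∫ s in (0 : ℝ)..t, E' s • f s‖ ≤ C := by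
      refine ⟨Cy + ‖y 0‖, fun t => ?_⟩
      rw [key t]
      calc ‖E' t • y t - y 0‖ ≤ ‖E' t • y t‖ + ‖y 0‖ := norm_sub_le _ _
        _ ≤ Cy + ‖y 0‖ := by
            rw [norm_smul, hE'norm t, one_mul]
            exact add_le_add_left (hCy t) _
    have hGaa : AlmostAutomorphic G := hV _ hgaa hGb
    have : AlmostAutomorphic (fun t => E t • (y 0 + G t)) :=
      aa_smul hEaa (aa_const_add (y 0) hGaa)
    have hyeq : y = fun t => E t • (y 0 + G t) := funext hy_eq
    rw [hyeq]
    exact this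
end

section
/- Let V be a complex Banach space, A : V → V a continuous linear operator, T(t) = exp(t·A) the associated operator group, and P : V → V a continuous linear operator with P∘P = P and A∘P = P∘A. Define G(t,s) = T(t−s)∘P for t ≥ s and G(t,s) = −T(t−s)∘(I−P) for t < s, and assume there are constants c, α > 0 with ‖G(t,s)‖ ≤ c·e^{−α|t−s|} (operator norm) for all t, s ∈ ℝ. If f : ℝ → V is bounded, continuous and almost automorphic, then y(t) = ∫_ℝ G(t,s)(f(s)) ds is the unique bounded differentiable solution of y'(t) = A(y(t)) + f(t) on ℝ, y is almost automorphic, and sup_{t∈ℝ} ‖y(t)‖ ≤ (2c/α)·sup_{t∈ℝ} ‖f(t)‖. -/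
open MeasureTheory Filter Topology

/-- The Green function associated with a bounded operator `A`, its group
`T(t) = exp(t A)` and a projection `P`. -/
noncomputable def GreenOp {V : Type*} [NormedAddCommGroup V] [NormedSpace ℂ V]
    (A P : V →L[ℂ] V) (t s : ℝ) : V →L[ℂ] V :=
  if s ≤ t then (NormedSpace.exp ((t - s) • A)).comp P
  else -((NormedSpace.exp ((t - s) • A)).comp (1 - P))

section GreenAux

variable {V : Type*} [NormedAddCommGroup V] [NormedSpace ℂ V] [CompleteSpace V]

set_option linter.unusedSectionVars false
set_option synthInstance.maxHeartbeats 1000000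
set_option maxHeartbeats 1000000

open Set

noncomputable instance clmNormedAlgebraRat : NormedAlgebra ℚ (V →L[ℂ] V) :=
  NormedAlgebra.restrictScalars ℚ ℂ (V →L[ℂ] V)

lemma expT_add (A : V →L[ℂ] V) (a b : ℝ) :
    NormedSpace.exp ((a + b) • A) = NormedSpace.exp (a • A) * NormedSpace.exp (b • A) := by
  rw [add_smul]
  exact NormedSpace.exp_add_of_commute (((Commute.refl A).smul_left a).smul_right b)

lemma expT_inv (A : V →L[ℂ] V) (t : ℝ) :
    NormedSpace.exp (t • A) * NormedSpace.exp ((-t) • A) = 1 := by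
  rw [← expT_add]
  simp [NormedSpace.exp_zero]

lemma expT_comm_P (A P : V →L[ℂ] V) (hAP : A.comp P = P.comp A) (t : ℝ) :
    Commute (NormedSpace.exp (t • A)) P :=
  ((Commute.smul_left (hAP : Commute A P) t)).exp_left

lemma expT_deriv (A : V →L[ℂ] V) (t : ℝ) :
    HasDerivAt (fun u : ℝ => NormedSpace.exp (u • A)) (A * NormedSpace.exp (t • A)) t := by
  have h := hasDerivAt_exp_smul_const' (𝕂 := ℝ) (𝔸 := V →L[ℂ] V) A t
  exact h

lemma expT_cont (A : V →L[ℂ] V) : Continuous fun t : ℝ => NormedSpace.exp (t • A) :=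
  NormedSpace.exp_continuous.comp (continuous_id.smul continuous_const)

lemma green_shift (A P : V →L[ℂ] V) (t s τ : ℝ) :
    GreenOp A P (t + τ) (s + τ) = GreenOp A P t s := by
  unfold GreenOp
  simp only [add_sub_add_right_eq_sub, add_le_add_iff_right]

lemma int_exp_neg_abs {α : ℝ} (hα : 0 < α) : Integrable (fun s : ℝ => Real.exp (-α * |s|)) := by
  have hIci : IntegrableOn (fun s : ℝ => Real.exp (-α * |s|)) (Ici 0) := by
    refine (Iff.mpr integrableOn_Ici_iff_integrableOn_Ioi (exp_neg_integrableOn_Ioi 0 hα)).congr_fun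
      (fun s hs => ?_) measurableSet_Ici
    rw [abs_of_nonneg hs]
  have hmap : (volume : Measure ℝ).map Neg.neg = volume :=
    (Measure.measurePreserving_neg _).map_eq
  have hIic : IntegrableOn (fun s : ℝ => Real.exp (-α * |s|)) (Iic 0) := by
    have he : MeasurableEmbedding (Neg.neg : ℝ → ℝ) :=
      (MeasurableEquiv.neg ℝ).measurableEmbedding
    have h2 := (he.integrableOn_map_iff (f := fun s : ℝ => Real.exp (-α * |s|))
      (s := Iic 0) (μ := volume))
    rw [hmap] at h2
    rw [h2]
    have hpre : (Neg.neg : ℝ → ℝ) ⁻¹' (Iic 0) = Ici 0 := by ext x; simp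
    rw [hpre]
    exact hIci.congr_fun (fun s hs => by simp [Function.comp, abs_neg]) measurableSet_Ici
  have h3 : IntegrableOn (fun s : ℝ => Real.exp (-α * |s|)) (Iic 0 ∪ Ioi 0) :=
    hIic.union (hIci.mono_set Ioi_subset_Ici_self)
  rwa [Iic_union_Ioi, integrableOn_univ] at h3

lemma int_exp_neg_abs' {α : ℝ} (hα : 0 < α) (t : ℝ) :
    Integrable (fun s : ℝ => Real.exp (-α * |t - s|)) := by
  have h := (int_exp_neg_abs hα).comp_sub_right t
  simpa [abs_sub_comm] using h

lemma integral_exp_neg_abs {α : ℝ} (hα : 0 < α) (t : ℝ) :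
    ∫ s : ℝ, Real.exp (-α * |t - s|) = 2 / α := by
  have h0 : ∫ s : ℝ, Real.exp (-α * |t - s|) = ∫ s : ℝ, Real.exp (-α * |s|) := by
    rw [← integral_sub_right_eq_self (fun s : ℝ => Real.exp (-α * |s|)) t]
    congr 1; funext s; rw [abs_sub_comm]
  rw [h0]
  have hint := int_exp_neg_abs hα
  have hIoi : ∫ s in Ioi (0:ℝ), Real.exp (-α * |s|) = 1 / α := by
    have h1 : ∀ s ∈ Ioi (0:ℝ), Real.exp (-α * |s|) = (fun x => Real.exp (-x)) (α * s) := by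
      intro s hs; rw [abs_of_pos hs]; ring_nf
    rw [setIntegral_congr_fun measurableSet_Ioi h1,
      integral_comp_mul_left_Ioi (fun x => Real.exp (-x)) 0 hα]
    simp [integral_exp_neg_Ioi_zero, integral_exp_Iic_zero, abs_of_pos (inv_pos.mpr hα), smul_eq_mul, one_div]
  have hIic : ∫ s in Iic (0:ℝ), Real.exp (-α * |s|) = 1 / α := by
    have h2 := integral_comp_neg_Ioi (c := (0:ℝ)) (f := fun s : ℝ => Real.exp (-α * |s|))
    simp only [abs_neg, neg_zero] at h2
    rw [← h2]
    exact hIoi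
  rw [← setIntegral_univ, ← Iic_union_Ioi (a := (0:ℝ)),
    setIntegral_union (Iic_disjoint_Ioi le_rfl) measurableSet_Ioi hint.integrableOn
      hint.integrableOn, hIic, hIoi]
  ring

lemma green_sm (A P : V →L[ℂ] V) (t : ℝ) {g : ℝ → V} (hg : StronglyMeasurable g) :
    StronglyMeasurable fun s => GreenOp A P t s (g s) := by
  have h1 : Continuous fun s : ℝ => NormedSpace.exp ((t - s) • A) :=
    NormedSpace.exp_continuous.comp ((continuous_const.sub continuous_id).smul continuous_const)
  have key : ∀ Q : V →L[ℂ] V, StronglyMeasurable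
      fun s => (NormedSpace.exp ((t - s) • A)) (Q (g s)) := fun Q =>
    isBoundedBilinearMap_apply.continuous.comp_stronglyMeasurable
      (h1.stronglyMeasurable.prodMk (Q.continuous.comp_stronglyMeasurable hg))
  have heq : (fun s => GreenOp A P t s (g s)) = fun s =>
      if s ≤ t then (NormedSpace.exp ((t - s) • A)) (P (g s))
      else -((NormedSpace.exp ((t - s) • A)) ((1 - P) (g s))) := by
    funext s; unfold GreenOp; split <;> simp
  rw [heq]
  exact (key P).ite measurableSet_Iic (key (1 - P)).neg

lemma green_pointwise_bound (A P : V →L[ℂ] V) {c α : ℝ}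
    (hdich : ∀ t s : ℝ, ‖GreenOp A P t s‖ ≤ c * Real.exp (-α * |t - s|))
    (t : ℝ) {g : ℝ → V} {M : ℝ} (hM : ∀ s, ‖g s‖ ≤ M) (s : ℝ) :
    ‖GreenOp A P t s (g s)‖ ≤ c * M * Real.exp (-α * |t - s|) := by
  calc ‖GreenOp A P t s (g s)‖ ≤ ‖GreenOp A P t s‖ * ‖g s‖ :=
        (GreenOp A P t s).le_opNorm (g s)
    _ ≤ (c * Real.exp (-α * |t - s|)) * M := by
        apply mul_le_mul (hdich t s) (hM s) (norm_nonneg _)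
        exact le_trans (norm_nonneg _) (hdich t s)
    _ = c * M * Real.exp (-α * |t - s|) := by ring

lemma green_integrable (A P : V →L[ℂ] V) {c α : ℝ} (hα : 0 < α)
    (hdich : ∀ t s : ℝ, ‖GreenOp A P t s‖ ≤ c * Real.exp (-α * |t - s|))
    (t : ℝ) {g : ℝ → V} (hg : StronglyMeasurable g) {M : ℝ} (hM : ∀ s, ‖g s‖ ≤ M) :
    Integrable (fun s => GreenOp A P t s (g s)) := by
  refine Integrable.mono' ((int_exp_neg_abs' hα t).const_mul (c * M))
    (green_sm A P t hg).aestronglyMeasurable (Filter.Eventually.of_forall fun s => ?_)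
  exact green_pointwise_bound A P hdich t hM s

lemma green_norm_le (A P : V →L[ℂ] V) {c α : ℝ} (hα : 0 < α)
    (hdich : ∀ t s : ℝ, ‖GreenOp A P t s‖ ≤ c * Real.exp (-α * |t - s|))
    (t : ℝ) {g : ℝ → V} (hg : StronglyMeasurable g) {M : ℝ} (hM : ∀ s, ‖g s‖ ≤ M) :
    ‖∫ s : ℝ, GreenOp A P t s (g s)‖ ≤ 2 * c / α * M := by
  have h := norm_integral_le_of_norm_le ((int_exp_neg_abs' hα t).const_mul (c * M))
    (Filter.Eventually.of_forall (green_pointwise_bound A P hdich t hM))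
  rw [integral_const_mul, integral_exp_neg_abs hα t] at h
  calc ‖∫ s : ℝ, GreenOp A P t s (g s)‖ ≤ c * M * (2 / α) := h
    _ = 2 * c / α * M := by ring

lemma green_translate (A P : V →L[ℂ] V) (g : ℝ → V) (t τ : ℝ) :
    (∫ s : ℝ, GreenOp A P (t + τ) s (g s)) = ∫ s : ℝ, GreenOp A P t s (g (s + τ)) := by
  rw [← integral_add_right_eq_self (fun s : ℝ => GreenOp A P (t + τ) s (g s)) τ]
  congr 1; funext s; rw [green_shift]

lemma expT_mul_apply (A : V →L[ℂ] V) (a b : ℝ) (x : V) :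
    NormedSpace.exp (a • A) (NormedSpace.exp (b • A) x) = NormedSpace.exp ((a + b) • A) x := by
  rw [expT_add]; rfl

lemma green_h1_integrableOn (A P : V →L[ℂ] V) {c α : ℝ} (hα : 0 < α)
    (hdich : ∀ t s : ℝ, ‖GreenOp A P t s‖ ≤ c * Real.exp (-α * |t - s|))
    {f : ℝ → V} (hfc : Continuous f) {M : ℝ} (hM : ∀ s, ‖f s‖ ≤ M) (u : ℝ) :
    IntegrableOn (fun s => NormedSpace.exp ((-s) • A) (P (f s))) (Iic u) := by
  have hint : IntegrableOn (fun s =>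
      NormedSpace.exp ((-u) • A) (GreenOp A P u s (f s))) (Iic u) :=
    (NormedSpace.exp ((-u) • A)).integrable_comp
      ((green_integrable A P hα hdich u hfc.stronglyMeasurable hM).integrableOn)
  refine hint.congr_fun (fun s hs => ?_) measurableSet_Iic
  have hG : GreenOp A P u s (f s) = NormedSpace.exp ((u - s) • A) (P (f s)) := by
    unfold GreenOp; rw [if_pos (mem_Iic.mp hs)]; rfl
  beta_reduce
  rw [hG, expT_mul_apply]
  congr 2
  ring

lemma green_h2_integrableOn (A P : V →L[ℂ] V) {c α : ℝ} (hα : 0 < α)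
    (hdich : ∀ t s : ℝ, ‖GreenOp A P t s‖ ≤ c * Real.exp (-α * |t - s|))
    {f : ℝ → V} (hfc : Continuous f) {M : ℝ} (hM : ∀ s, ‖f s‖ ≤ M) (u : ℝ) :
    IntegrableOn (fun s => NormedSpace.exp ((-s) • A) ((1 - P) (f s))) (Ioi u) := by
  have hint : IntegrableOn (fun s =>
      -(NormedSpace.exp ((-u) • A) (GreenOp A P u s (f s)))) (Ioi u) :=
    ((NormedSpace.exp ((-u) • A)).integrable_comp
      ((green_integrable A P hα hdich u hfc.stronglyMeasurable hM).integrableOn)).neg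
  refine hint.congr_fun (fun s hs => ?_) measurableSet_Ioi
  have hs' : ¬ (s ≤ u) := not_le.mpr (mem_Ioi.mp hs)
  have hG : GreenOp A P u s (f s) = -(NormedSpace.exp ((u - s) • A) ((1 - P) (f s))) := by
    unfold GreenOp; rw [if_neg hs']; rfl
  beta_reduce
  rw [hG, map_neg, neg_neg, expT_mul_apply]
  congr 2
  ring

lemma green_split (A P : V →L[ℂ] V) {c α : ℝ} (hα : 0 < α)
    (hdich : ∀ t s : ℝ, ‖GreenOp A P t s‖ ≤ c * Real.exp (-α * |t - s|))
    {f : ℝ → V} (hfc : Continuous f) {M : ℝ} (hM : ∀ s, ‖f s‖ ≤ M) (u : ℝ) :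
    (∫ s : ℝ, GreenOp A P u s (f s)) =
      (NormedSpace.exp (u • A))
        ((∫ s in Iic u, NormedSpace.exp ((-s) • A) (P (f s))) -
         (∫ s in Ioi u, NormedSpace.exp ((-s) • A) ((1 - P) (f s)))) := by
  have hint := green_integrable A P hα hdich u hfc.stronglyMeasurable hM
  have hsplit : (∫ s : ℝ, GreenOp A P u s (f s)) =
      (∫ s in Iic u, GreenOp A P u s (f s)) + ∫ s in Ioi u, GreenOp A P u s (f s) := by
    rw [← setIntegral_univ, ← Iic_union_Ioi (a := u),
      setIntegral_union (Iic_disjoint_Ioi le_rfl) measurableSet_Ioi hint.integrableOn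
        hint.integrableOn]
  have hIic : (∫ s in Iic u, GreenOp A P u s (f s)) =
      NormedSpace.exp (u • A) (∫ s in Iic u, NormedSpace.exp ((-s) • A) (P (f s))) := by
    rw [← ContinuousLinearMap.integral_comp_comm _ (green_h1_integrableOn A P hα hdich hfc hM u)]
    refine setIntegral_congr_fun measurableSet_Iic (fun s hs => ?_)
    have hG : GreenOp A P u s (f s) = NormedSpace.exp ((u - s) • A) (P (f s)) := by
      unfold GreenOp; rw [if_pos (mem_Iic.mp hs)]; rfl
    rw [hG, expT_mul_apply]
    congr 2
  have hIoi : (∫ s in Ioi u, GreenOp A P u s (f s)) =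
      -(NormedSpace.exp (u • A) (∫ s in Ioi u, NormedSpace.exp ((-s) • A) ((1 - P) (f s)))) := by
    rw [← ContinuousLinearMap.integral_comp_comm _ (green_h2_integrableOn A P hα hdich hfc hM u),
      ← integral_neg]
    refine setIntegral_congr_fun measurableSet_Ioi (fun s hs => ?_)
    have hs' : ¬ (s ≤ u) := not_le.mpr (mem_Ioi.mp hs)
    have hG : GreenOp A P u s (f s) = -(NormedSpace.exp ((u - s) • A) ((1 - P) (f s))) := by
      unfold GreenOp; rw [if_neg hs']; rfl
    rw [hG, expT_mul_apply]
    congr 3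
  rw [hsplit, hIic, hIoi, map_sub]
  abel

lemma integral_Ioi_sub_Ioi {g : ℝ → V} {a b : ℝ} (ha : IntegrableOn g (Ioi a))
    (hb : IntegrableOn g (Ioi b)) :
    ((∫ s in Ioi a, g s) - ∫ s in Ioi b, g s) = ∫ s in a..b, g s := by
  rcases le_total a b with hab | hab
  · rw [← Ioc_union_Ioi_eq_Ioi hab,
      setIntegral_union (Ioc_disjoint_Ioi le_rfl) measurableSet_Ioi
        ((ha.mono_set Ioc_subset_Ioi_self)) hb, intervalIntegral.integral_of_le hab]
    abel
  · rw [← Ioc_union_Ioi_eq_Ioi hab,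
      setIntegral_union (Ioc_disjoint_Ioi le_rfl) measurableSet_Ioi
        ((hb.mono_set Ioc_subset_Ioi_self)) ha, intervalIntegral.integral_symm,
      intervalIntegral.integral_of_le hab]
    abel

lemma green_deriv (A P : V →L[ℂ] V) (hAP : A.comp P = P.comp A) {c α : ℝ} (hα : 0 < α)
    (hdich : ∀ t s : ℝ, ‖GreenOp A P t s‖ ≤ c * Real.exp (-α * |t - s|))
    {f : ℝ → V} (hfc : Continuous f) {M : ℝ} (hM : ∀ s, ‖f s‖ ≤ M) (t : ℝ) :
    HasDerivAt (fun u => ∫ s : ℝ, GreenOp A P u s (f s))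
      (A (∫ s : ℝ, GreenOp A P t s (f s)) + f t) t := by
  set h₁ : ℝ → V := fun s => NormedSpace.exp ((-s) • A) (P (f s)) with hh₁
  set h₂ : ℝ → V := fun s => NormedSpace.exp ((-s) • A) ((1 - P) (f s)) with hh₂
  have hexpc : ∀ Q : V →L[ℂ] V, Continuous fun s : ℝ => NormedSpace.exp ((-s) • A) (Q (f s)) := by
    intro Q
    exact (NormedSpace.exp_continuous.comp
      ((continuous_neg).smul continuous_const)).clm_apply (Q.continuous.comp hfc)
  have h₁c : Continuous h₁ := hexpc P
  have h₂c : Continuous h₂ := hexpc (1 - P)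
  have hIi : ∀ u : ℝ, IntegrableOn h₁ (Iic u) := green_h1_integrableOn A P hα hdich hfc hM
  have hIo : ∀ u : ℝ, IntegrableOn h₂ (Ioi u) := green_h2_integrableOn A P hα hdich hfc hM
  have hFd : HasDerivAt (fun u => ∫ s in Iic u, h₁ s) (h₁ t) t := by
    have hF : (fun u => ∫ s in Iic u, h₁ s) =
        fun u => (∫ s in Iic (0:ℝ), h₁ s) + ∫ s in (0:ℝ)..u, h₁ s := by
      funext u
      rw [← intervalIntegral.integral_Iic_sub_Iic (hIi 0) (hIi u)]
      abel
    rw [hF]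
    exact (intervalIntegral.integral_hasDerivAt_right (h₁c.intervalIntegrable 0 t)
      (h₁c.stronglyMeasurable.stronglyMeasurableAtFilter) h₁c.continuousAt).const_add _
  have hHd : HasDerivAt (fun u => ∫ s in Ioi u, h₂ s) (-(h₂ t)) t := by
    have hH : (fun u => ∫ s in Ioi u, h₂ s) =
        fun u => (∫ s in Ioi (0:ℝ), h₂ s) - ∫ s in (0:ℝ)..u, h₂ s := by
      funext u
      rw [← integral_Ioi_sub_Ioi (hIo 0) (hIo u)]
      abel
    rw [hH]
    exact ((intervalIntegral.integral_hasDerivAt_right (h₂c.intervalIntegrable 0 t)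
      (h₂c.stronglyMeasurable.stronglyMeasurableAtFilter) h₂c.continuousAt).const_sub _)
  have hw : HasDerivAt (fun u => (∫ s in Iic u, h₁ s) - ∫ s in Ioi u, h₂ s)
      (h₁ t + h₂ t) t := by
    have := hFd.sub hHd
    rwa [sub_neg_eq_add] at this
  have hΦR : HasDerivAt (fun u : ℝ => (NormedSpace.exp (u • A)).restrictScalars ℝ)
      ((A * NormedSpace.exp (t • A)).restrictScalars ℝ) t :=
    ((ContinuousLinearMap.restrictScalarsIsometry ℂ V V ℝ
      ℝ).toContinuousLinearMap.hasFDerivAt).comp_hasDerivAt t (expT_deriv A t)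
  have hmain := hΦR.clm_apply hw
  simp only [ContinuousLinearMap.coe_restrictScalars'] at hmain
  have hfun : (fun u : ℝ => NormedSpace.exp (u • A)
      ((∫ s in Iic u, h₁ s) - ∫ s in Ioi u, h₂ s)) =
      fun u => ∫ s : ℝ, GreenOp A P u s (f s) := by
    funext u
    exact (green_split A P hα hdich hfc hM u).symm
  rw [hfun] at hmain
  have hval1 : (A * NormedSpace.exp (t • A)) ((∫ s in Iic t, h₁ s) - ∫ s in Ioi t, h₂ s)
      = A (∫ s : ℝ, GreenOp A P t s (f s)) := by
    rw [ContinuousLinearMap.mul_apply, ← green_split A P hα hdich hfc hM t]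
  have hval2 : NormedSpace.exp (t • A) (h₁ t + h₂ t) = f t := by
    have hsum : h₁ t + h₂ t = NormedSpace.exp ((-t) • A) (f t) := by
      rw [hh₁, hh₂, ← map_add]
      congr 1
      simp [ContinuousLinearMap.sub_apply]
    rw [hsum, expT_mul_apply]
    have ht0 : (t + -t : ℝ) = 0 := by ring
    rw [ht0]
    simp [NormedSpace.exp_zero]
  rwa [hval1, hval2] at hmain

lemma ode_rep (A : V →L[ℂ] V) {w : ℝ → V} (hw : ∀ t, HasDerivAt w (A (w t)) t) (t : ℝ) :
    w t = NormedSpace.exp (t • A) (w 0) := by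
  have hg : ∀ u : ℝ, HasDerivAt (fun v : ℝ => NormedSpace.exp ((-v) • A) (w v)) 0 u := by
    intro u
    have hΦ : HasDerivAt (fun v : ℝ => NormedSpace.exp ((-v) • A))
        ((-1 : ℝ) • (A * NormedSpace.exp ((-u) • A))) u := by
      have hneg : HasDerivAt (fun v : ℝ => -v) (-1 : ℝ) u := (hasDerivAt_id u).neg
      exact HasDerivAt.scomp u (expT_deriv A (-u)) hneg
    have hΦR : HasDerivAt (fun v : ℝ => (NormedSpace.exp ((-v) • A)).restrictScalars ℝ)
        (((-1 : ℝ) • (A * NormedSpace.exp ((-u) • A))).restrictScalars ℝ) u :=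
      ((ContinuousLinearMap.restrictScalarsIsometry ℂ V V ℝ
        ℝ).toContinuousLinearMap.hasFDerivAt).comp_hasDerivAt u hΦ
    have hmain := hΦR.clm_apply (hw u)
    simp only [ContinuousLinearMap.coe_restrictScalars'] at hmain
    have hval : ((-1 : ℝ) • (A * NormedSpace.exp ((-u) • A))) (w u)
        + (NormedSpace.exp ((-u) • A)) (A (w u)) = 0 := by
      have hcomm : (NormedSpace.exp ((-u) • A)) (A (w u))
          = A ((NormedSpace.exp ((-u) • A)) (w u)) := by
        have h := (((Commute.refl A).smul_right (-u)).exp_right).eq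
        have := DFunLike.congr_fun h (w u)
        simpa [ContinuousLinearMap.mul_apply] using this.symm
      simp only [neg_one_smul, neg_smul, ContinuousLinearMap.neg_apply,
        ContinuousLinearMap.smul_apply, ContinuousLinearMap.mul_apply] at hcomm ⊢
      rw [hcomm]
      simp
    rwa [hval] at hmain
  have hconst : ∀ u : ℝ, NormedSpace.exp ((-u) • A) (w u)
      = NormedSpace.exp ((-(0:ℝ)) • A) (w 0) := by
    intro u
    apply is_const_of_fderiv_eq_zero (𝕜 := ℝ)
      (f := fun v : ℝ => NormedSpace.exp ((-v) • A) (w v))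
    · exact fun v => (hg v).differentiableAt
    · intro v
      rw [(hg v).hasFDerivAt.fderiv]
      ext
      simp
  have hkey := hconst t
  simp only [neg_zero, zero_smul, NormedSpace.exp_zero, ContinuousLinearMap.one_apply] at hkey
  rw [← hkey, expT_mul_apply]
  rw [show t + -t = (0:ℝ) by ring]
  simp [NormedSpace.exp_zero]

lemma green_unique_zero (A P : V →L[ℂ] V) (hAP : A.comp P = P.comp A) {c α : ℝ} (hα : 0 < α)
    (hdich : ∀ t s : ℝ, ‖GreenOp A P t s‖ ≤ c * Real.exp (-α * |t - s|))
    {w : ℝ → V} (hw : ∀ t, HasDerivAt w (A (w t)) t) {Cw : ℝ}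
    (hb : ∀ t, ‖w t‖ ≤ Cw) (t : ℝ) : w t = 0 := by
  have hrep := ode_rep A hw
  have hCw : 0 ≤ Cw := le_trans (norm_nonneg _) (hb 0)
  have hlim : ∀ b : ℕ → ℝ, Tendsto b atTop atTop →
      Tendsto (fun n : ℕ => c * Real.exp (-α * b n) * Cw) atTop (𝓝 0) := by
    intro b hbt
    have h1 : Tendsto (fun n : ℕ => -α * b n) atTop atBot :=
      hbt.const_mul_atTop_of_neg (neg_neg_iff_pos.mpr hα)
    have h2 := Real.tendsto_exp_atBot.comp h1
    simpa using (h2.const_mul c).mul_const Cw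
  -- P part
  have hPzero : P (w 0) = 0 := by
    have hboundP : ∀ u : ℝ, u ≤ 0 → ‖P (w 0)‖ ≤ c * Real.exp (-α * |u|) * Cw := by
      intro u hu
      have e1 : P (w u) = NormedSpace.exp (u • A) (P (w 0)) := by
        rw [hrep u]
        have h := DFunLike.congr_fun (expT_comm_P A P hAP u).eq (w 0)
        simpa [ContinuousLinearMap.mul_apply] using h.symm
      have e2 : P (w 0) = NormedSpace.exp ((-u) • A) (P (w u)) := by
        rw [e1, expT_mul_apply, show (-u) + u = (0:ℝ) by ring]
        simp [NormedSpace.exp_zero]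
      have e3 : NormedSpace.exp ((-u) • A) (P (w u))
          = (GreenOp A P 0 u) (w u) := by
        unfold GreenOp
        rw [if_pos hu]
        rw [show (0:ℝ) - u = -u by ring]
        rfl
      rw [e2, e3]
      calc ‖(GreenOp A P 0 u) (w u)‖ ≤ ‖GreenOp A P 0 u‖ * ‖w u‖ :=
            (GreenOp A P 0 u).le_opNorm (w u)
        _ ≤ (c * Real.exp (-α * |u|)) * Cw := by
            have hd := hdich 0 u
            rw [show (0:ℝ) - u = -u by ring, abs_neg] at hd
            exact mul_le_mul hd (hb u) (norm_nonneg _)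
              (le_trans (norm_nonneg _) hd)
    have hbound' : ∀ n : ℕ, ‖P (w 0)‖ ≤ c * Real.exp (-α * (n:ℝ)) * Cw := by
      intro n
      have := hboundP (-(n:ℝ)) (by simp)
      simpa using this
    have hle : ‖P (w 0)‖ ≤ 0 :=
      ge_of_tendsto' (hlim (fun n : ℕ => (n:ℝ)) tendsto_natCast_atTop_atTop) hbound'
    exact norm_le_zero_iff.mp hle
  -- (1-P) part
  have hQzero : (1 - P) (w 0) = 0 := by
    have hboundQ : ∀ u : ℝ, 0 < u → ‖(1 - P) (w 0)‖ ≤ c * Real.exp (-α * |u|) * Cw := by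
      intro u hu
      have hcommQ : Commute (NormedSpace.exp (u • A)) (1 - P) :=
        (Commute.one_right _).sub_right (expT_comm_P A P hAP u)
      have e1 : (1 - P) (w u) = NormedSpace.exp (u • A) ((1 - P) (w 0)) := by
        rw [hrep u]
        have h := DFunLike.congr_fun hcommQ.eq (w 0)
        simpa [ContinuousLinearMap.mul_apply] using h.symm
      have e2 : (1 - P) (w 0) = NormedSpace.exp ((-u) • A) ((1 - P) (w u)) := by
        rw [e1, expT_mul_apply, show (-u) + u = (0:ℝ) by ring]
        simp [NormedSpace.exp_zero]
      have e3 : NormedSpace.exp ((-u) • A) ((1 - P) (w u))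
          = -((GreenOp A P 0 u) (w u)) := by
        unfold GreenOp
        rw [if_neg (not_le.mpr hu)]
        rw [show (0:ℝ) - u = -u by ring]
        simp
      rw [e2, e3, norm_neg]
      calc ‖(GreenOp A P 0 u) (w u)‖ ≤ ‖GreenOp A P 0 u‖ * ‖w u‖ :=
            (GreenOp A P 0 u).le_opNorm (w u)
        _ ≤ (c * Real.exp (-α * |u|)) * Cw := by
            have hd := hdich 0 u
            rw [show (0:ℝ) - u = -u by ring, abs_neg] at hd
            exact mul_le_mul hd (hb u) (norm_nonneg _)
              (le_trans (norm_nonneg _) hd)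
    have hbound' : ∀ n : ℕ, ‖(1 - P) (w 0)‖ ≤ c * Real.exp (-α * ((n:ℝ) + 1)) * Cw := by
      intro n
      have := hboundQ ((n:ℝ) + 1) (by positivity)
      rwa [abs_of_pos (by positivity)] at this
    have hle : ‖(1 - P) (w 0)‖ ≤ 0 :=
      ge_of_tendsto' (hlim (fun n : ℕ => (n:ℝ) + 1)
        (tendsto_atTop_add_const_right _ _ tendsto_natCast_atTop_atTop)) hbound'
    exact norm_le_zero_iff.mp hle
  have hw0 : w 0 = 0 := by
    have : w 0 = P (w 0) + (1 - P) (w 0) := by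
      simp [ContinuousLinearMap.sub_apply]
    rw [this, hPzero, hQzero, add_zero]
  rw [hrep t, hw0, map_zero]

end GreenAux


theorem abstract_linear_equation_unique_almost_automorphic_solution
    {V : Type*} [NormedAddCommGroup V] [NormedSpace ℂ V] [CompleteSpace V]
    (A P : V →L[ℂ] V) (hP : P.comp P = P) (hAP : A.comp P = P.comp A)
    (c α : ℝ) (hc : 0 < c) (hα : 0 < α)
    (hdich : ∀ t s : ℝ, ‖GreenOp A P t s‖ ≤ c * Real.exp (-α * |t - s|))
    (f : ℝ → V) (hfc : Continuous f) (hfb : ∃ C, ∀ t, ‖f t‖ ≤ C)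
    (hfaa : AlmostAutomorphic f) :
    (∀ t : ℝ, HasDerivAt (fun t => ∫ s : ℝ, GreenOp A P t s (f s))
      (A (∫ s : ℝ, GreenOp A P t s (f s)) + f t) t) ∧
    (∃ C, ∀ t : ℝ, ‖∫ s : ℝ, GreenOp A P t s (f s)‖ ≤ C) ∧
    (∀ z : ℝ → V, (∀ t : ℝ, HasDerivAt z (A (z t) + f t) t) →
      (∃ C, ∀ t : ℝ, ‖z t‖ ≤ C) → z = fun t => ∫ s : ℝ, GreenOp A P t s (f s)) ∧
    AlmostAutomorphic (fun t => ∫ s : ℝ, GreenOp A P t s (f s)) ∧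
    (∀ t : ℝ, ‖∫ s : ℝ, GreenOp A P t s (f s)‖ ≤ (2 * c / α) * ⨆ t : ℝ, ‖f t‖) := by
  obtain ⟨Mf, hMf⟩ := hfb
  have hfsm := hfc.stronglyMeasurable
  have hyd : ∀ t : ℝ, HasDerivAt (fun t => ∫ s : ℝ, GreenOp A P t s (f s))
      (A (∫ s : ℝ, GreenOp A P t s (f s)) + f t) t :=
    fun t => green_deriv A P hAP hα hdich hfc hMf t
  have hyb : ∀ t : ℝ, ‖∫ s : ℝ, GreenOp A P t s (f s)‖ ≤ 2 * c / α * Mf :=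
    fun t => green_norm_le A P hα hdich t hfsm hMf
  refine ⟨hyd, ⟨2 * c / α * Mf, hyb⟩, ?_, ?_, ?_⟩
  · -- uniqueness
    intro z hz hzb
    obtain ⟨Cz, hCz⟩ := hzb
    funext t
    have hwd : ∀ u : ℝ, HasDerivAt (fun v => z v - ∫ s : ℝ, GreenOp A P v s (f s))
        (A (z u - ∫ s : ℝ, GreenOp A P u s (f s))) u := by
      intro u
      have h := (hz u).sub (hyd u)
      have he : (A (z u) + f u) - (A (∫ s : ℝ, GreenOp A P u s (f s)) + f u)
          = A (z u - ∫ s : ℝ, GreenOp A P u s (f s)) := by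
        rw [map_sub]; abel
      rwa [he] at h
    have hwb : ∀ u : ℝ, ‖z u - ∫ s : ℝ, GreenOp A P u s (f s)‖ ≤ Cz + 2 * c / α * Mf :=
      fun u => (norm_sub_le _ _).trans (add_le_add (hCz u) (hyb u))
    have hz0 := green_unique_zero A P hAP hα hdich hwd hwb t
    exact sub_eq_zero.mp hz0
  · -- almost automorphic
    constructor
    · exact continuous_iff_continuousAt.mpr fun t => (hyd t).continuousAt
    · intro σ
      obtain ⟨k, hk, ft, h1, h2⟩ := hfaa.2 σ
      have htrc : ∀ n : ℕ, Continuous fun s : ℝ => f (s + σ (k n)) :=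
        fun n => hfc.comp (continuous_id.add continuous_const)
      have hftsm : StronglyMeasurable ft :=
        stronglyMeasurable_of_tendsto atTop (fun n => (htrc n).stronglyMeasurable)
          (tendsto_pi_nhds.mpr h1)
      have hftb : ∀ s, ‖ft s‖ ≤ Mf := fun s =>
        le_of_tendsto (h1 s).norm (Filter.Eventually.of_forall fun n => hMf _)
      refine ⟨k, hk, fun t => ∫ s : ℝ, GreenOp A P t s (ft s), ?_, ?_⟩
      · intro t
        have heq : ∀ n : ℕ, (fun t => ∫ s : ℝ, GreenOp A P t s (f s)) (t + σ (k n))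
            = ∫ s : ℝ, GreenOp A P t s (f (s + σ (k n))) :=
          fun n => green_translate A P f t (σ (k n))
        refine Filter.Tendsto.congr (fun n => (heq n).symm) ?_
        exact tendsto_integral_of_dominated_convergence
          (fun s => c * Mf * Real.exp (-α * |t - s|))
          (fun n => (green_sm A P t (htrc n).stronglyMeasurable).aestronglyMeasurable)
          ((int_exp_neg_abs' hα t).const_mul (c * Mf))
          (fun n => Filter.Eventually.of_forall fun s =>
            green_pointwise_bound A P hdich t (fun s' => hMf _) s)
          (Filter.Eventually.of_forall fun s =>
            ((GreenOp A P t s).continuous.tendsto _).comp (h1 s))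
      · intro t
        have heq : ∀ n : ℕ, (fun t => ∫ s : ℝ, GreenOp A P t s (ft s)) (t - σ (k n))
            = ∫ s : ℝ, GreenOp A P t s (ft (s - σ (k n))) := by
          intro n
          have h := green_translate A P ft t (-(σ (k n)))
          simpa [sub_eq_add_neg] using h
        refine Filter.Tendsto.congr (fun n => (heq n).symm) ?_
        exact tendsto_integral_of_dominated_convergence
          (fun s => c * Mf * Real.exp (-α * |t - s|))
          (fun n => (green_sm A P t
            (hftsm.comp_measurable (measurable_id.sub measurable_const))).aestronglyMeasurable)
          ((int_exp_neg_abs' hα t).const_mul (c * Mf))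
          (fun n => Filter.Eventually.of_forall fun s =>
            green_pointwise_bound A P hdich t (fun s' => hftb _) s)
          (Filter.Eventually.of_forall fun s =>
            ((GreenOp A P t s).continuous.tendsto _).comp (h2 s))
  · -- sup bound
    intro t
    have hbdd : BddAbove (Set.range fun u : ℝ => ‖f u‖) :=
      ⟨Mf, by rintro x ⟨u, rfl⟩; exact hMf u⟩
    exact green_norm_le A P hα hdich t hfsm (fun u => le_ciSup hbdd u)
end
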